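/- arXiv:1803.04756 — 3 statements merged into one kernel-verified Lean document; each statement's English description precedes it below -/
import Mathlib

section
/- Let G be a mean-payoff parity game whose vertex priorities are bounded by an even number d. If there exists a progress measure for G (over some linearly ordered set M), then the whole vertex set V, viewed as a subgame, has a strategy decomposition for Dis. -/
/-- A mean-payoff parity game on a vertex type `V`: a directed graph in which
every vertex has at least one outgoing edge, a partition of the vertices into
those owned by player Dis (`disOwns v`) and those owned by player Con,
a priority function and an integer cost function on edges. -/
structure MPPGame (V : Type) where
  edge : V → V → Prop
  disOwns : V → Prop
  pri : V → ℕ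
  cost : V → V → ℤ
  exists_succ : ∀ v, ∃ u, edge v u

/-- `A`, `B`, `C` partition `W`. -/
def Partition3 {V : Type} (W A B C : Set V) : Prop :=
  A ∪ B ∪ C = W ∧ Disjoint A B ∧ Disjoint A C ∧ Disjoint B C

/-- Lexicographic order on finite sequences, in which a proper prefix is
smaller than any of its proper extensions. -/
def seqLt {M : Type} (lt : M → M → Prop) : List M → List M → Prop :=
  List.Lex lt

/-- The `p`-truncation of a sequence `⟨m_{d-1}, m_{d-3}, …, m_ℓ⟩` (indexed by
odd numbers from `d-1` downwards): keep only the components `m_i` with `i ≥ p`. -/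
def trunc {M : Type} (d p : ℕ) (s : List M) : List M :=
  s.take ((d + 1 - p) / 2)

/-- The order on finite binary strings: `0s < ε`, `ε < 1s`, and
`bs < bs'` iff `s < s'`. -/
def binLt : List Bool → List Bool → Prop
  | [], [] => False
  | false :: _, [] => True
  | true :: _, [] => False
  | [], false :: _ => False
  | [], true :: _ => True
  | a :: s, b :: t => (a = false ∧ b = true) ∨ (a = b ∧ binLt s t)

/-- Membership in `S_{n,d}`: sequences `⟨m_{d-1}, …, m_ℓ⟩` of binary strings
with `ℓ` odd, `1 ≤ ℓ ≤ d+1` (equivalently `2·len ≤ d`) and total length at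
most `⌈log₂ n⌉`. -/
def inSnd (n d : ℕ) (s : List (List Bool)) : Prop :=
  2 * s.length ≤ d ∧ (s.map List.length).sum ≤ Nat.clog 2 n

namespace MPPGame

variable {V : Type}

/-- An infinite play: each consecutive pair is an edge. -/
def Play (G : MPPGame V) (p : ℕ → V) : Prop :=
  ∀ i, G.edge (p i) (p (i + 1))

/-- An infinite play that stays in the subgame induced by `W`. -/
def PlayIn (G : MPPGame V) (W : Set V) (p : ℕ → V) : Prop :=
  (∀ i, p i ∈ W) ∧ ∀ i, G.edge (p i) (p (i + 1))

/-- The mean payoff of a play: the limit superior of the averages of the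
partial sums of the edge costs. -/
noncomputable def meanPayoff (G : MPPGame V) (p : ℕ → V) : ℝ :=
  Filter.limsup
    (fun N => (∑ i ∈ Finset.range N, (G.cost (p i) (p (i + 1)) : ℝ)) / (N : ℝ))
    Filter.atTop

/-- Priority `k` occurs infinitely often along the play `p`. -/
def InfOften (G : MPPGame V) (p : ℕ → V) (k : ℕ) : Prop :=
  ∀ N, ∃ i, N ≤ i ∧ G.pri (p i) = k

/-- A play is winning for Con if the highest priority occurring infinitely
often is odd and the mean payoff is negative. -/
def ConWinsPlay (G : MPPGame V) (p : ℕ → V) : Prop :=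
  (∃ k, Odd k ∧ G.InfOften p k ∧ ∀ j, G.InfOften p j → j ≤ k) ∧
    G.meanPayoff p < 0

/-- A play is winning for Dis iff it is not winning for Con. -/
def DisWinsPlay (G : MPPGame V) (p : ℕ → V) : Prop :=
  ¬ G.ConWinsPlay p

/-- A (history-dependent) strategy for Dis: given the list of previously
visited vertices and the current vertex (owned by Dis), it picks a successor
along an edge. -/
def DisStrategy (G : MPPGame V) (σ : List V → V → V) : Prop :=
  ∀ h v, G.disOwns v → G.edge v (σ h v)

/-- A (history-dependent) strategy for Con. -/
def ConStrategy (G : MPPGame V) (σ : List V → V → V) : Prop :=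
  ∀ h v, ¬ G.disOwns v → G.edge v (σ h v)

/-- A play is consistent with a strategy `σ` of Dis. -/
def ConsistentDis (G : MPPGame V) (σ : List V → V → V) (p : ℕ → V) : Prop :=
  ∀ i, G.disOwns (p i) → p (i + 1) = σ ((List.range i).map p) (p i)

/-- A play is consistent with a strategy `σ` of Con. -/
def ConsistentCon (G : MPPGame V) (σ : List V → V → V) (p : ℕ → V) : Prop :=
  ∀ i, ¬ G.disOwns (p i) → p (i + 1) = σ ((List.range i).map p) (p i)

/-- A positional strategy for Dis. -/
def PosDisStrategy (G : MPPGame V) (σ : V → V) : Prop :=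
  ∀ v, G.disOwns v → G.edge v (σ v)

/-- A positional strategy for Con. -/
def PosConStrategy (G : MPPGame V) (σ : V → V) : Prop :=
  ∀ v, ¬ G.disOwns v → G.edge v (σ v)

/-- A play is consistent with a positional strategy `σ` of Dis. -/
def ConsistentDisPos (G : MPPGame V) (σ : V → V) (p : ℕ → V) : Prop :=
  ∀ i, G.disOwns (p i) → p (i + 1) = σ (p i)

/-- A play is consistent with a positional strategy `σ` of Con. -/
def ConsistentConPos (G : MPPGame V) (σ : V → V) (p : ℕ → V) : Prop :=
  ∀ i, ¬ G.disOwns (p i) → p (i + 1) = σ (p i)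

/-- The strategy `σ` of Dis is winning for Dis from `v`. -/
def DisWinsFrom (G : MPPGame V) (σ : List V → V → V) (v : V) : Prop :=
  ∀ p, G.Play p → p 0 = v → G.ConsistentDis σ p → G.DisWinsPlay p

/-- The strategy `σ` of Con is winning for Con from `v`. -/
def ConWinsFrom (G : MPPGame V) (σ : List V → V → V) (v : V) : Prop :=
  ∀ p, G.Play p → p 0 = v → G.ConsistentCon σ p → G.ConWinsPlay p

/-- The positional strategy `σ` of Dis is winning for Dis from `v`. -/
def DisWinsFromPos (G : MPPGame V) (σ : V → V) (v : V) : Prop :=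
  ∀ p, G.Play p → p 0 = v → G.ConsistentDisPos σ p → G.DisWinsPlay p

/-- The positional strategy `σ` of Con is winning for Con from `v`. -/
def ConWinsFromPos (G : MPPGame V) (σ : V → V) (v : V) : Prop :=
  ∀ p, G.Play p → p 0 = v → G.ConsistentConPos σ p → G.ConWinsPlay p

/-- `W` is a trap for Con: every Con vertex of `W` has all its outgoing edges
into `W`, and every Dis vertex of `W` has at least one outgoing edge into `W`. -/
def TrapForCon (G : MPPGame V) (W : Set V) : Prop :=
  ∀ v ∈ W, (¬ G.disOwns v → ∀ u, G.edge v u → u ∈ W) ∧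
    (G.disOwns v → ∃ u ∈ W, G.edge v u)

/-- `W` is a trap for Dis. -/
def TrapForDis (G : MPPGame V) (W : Set V) : Prop :=
  ∀ v ∈ W, (G.disOwns v → ∀ u, G.edge v u → u ∈ W) ∧
    (¬ G.disOwns v → ∃ u ∈ W, G.edge v u)

/-- `R` is a trap for Con inside the subgame induced by `W` (only edges
within `W` count for Con). -/
def TrapForConIn (G : MPPGame V) (W R : Set V) : Prop :=
  ∀ v ∈ R, (¬ G.disOwns v → ∀ u ∈ W, G.edge v u → u ∈ R) ∧
    (G.disOwns v → ∃ u ∈ R, G.edge v u)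

/-- `R` is a trap for Dis inside the subgame induced by `W`. -/
def TrapForDisIn (G : MPPGame V) (W R : Set V) : Prop :=
  ∀ v ∈ R, (G.disOwns v → ∀ u ∈ W, G.edge v u → u ∈ R) ∧
    (¬ G.disOwns v → ∃ u ∈ R, G.edge v u)

/-- `W` induces a subgame: it is nonempty and every vertex of `W` has an
outgoing edge within `W`. -/
def IsSubgame (G : MPPGame V) (W : Set V) : Prop :=
  W.Nonempty ∧ ∀ v ∈ W, ∃ u ∈ W, G.edge v u

/-- `τ` is a positional reachability strategy for Dis from `T` to `B` in the
subgame `W`: it is a legal positional strategy within `W`, and every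
consistent play in `W` starting in `T` reaches `B`. -/
def DisReach (G : MPPGame V) (W T B : Set V) (τ : V → V) : Prop :=
  (∀ v ∈ W, G.disOwns v → G.edge v (τ v) ∧ τ v ∈ W) ∧
    ∀ p, G.PlayIn W p → p 0 ∈ T → G.ConsistentDisPos τ p → ∃ i, p i ∈ B

/-- `τ` is a positional reachability strategy for Con from `T` to `B` in `W`. -/
def ConReach (G : MPPGame V) (W T B : Set V) (τ : V → V) : Prop :=
  (∀ v ∈ W, ¬ G.disOwns v → G.edge v (τ v) ∧ τ v ∈ W) ∧
    ∀ p, G.PlayIn W p → p 0 ∈ T → G.ConsistentConPos τ p → ∃ i, p i ∈ B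

/-- `σ` is a positional strategy for Dis that is mean-payoff winning for Dis on
`R`: every consistent play in `R` has limsup average cost `≥ 0`. -/
def DisMPWin (G : MPPGame V) (R : Set V) (σ : V → V) : Prop :=
  (∀ v ∈ R, G.disOwns v → G.edge v (σ v) ∧ σ v ∈ R) ∧
    ∀ p, G.PlayIn R p → G.ConsistentDisPos σ p → 0 ≤ G.meanPayoff p

/-- `σ` is a positional strategy for Con that is mean-payoff winning for Con on
`R`: every consistent play in `R` has limsup average cost `< 0`. -/
def ConMPWin (G : MPPGame V) (R : Set V) (σ : V → V) : Prop :=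
  (∀ v ∈ R, ¬ G.disOwns v → G.edge v (σ v) ∧ σ v ∈ R) ∧
    ∀ p, G.PlayIn R p → G.ConsistentConPos σ p → G.meanPayoff p < 0

/-- `DisDecomp G b W` : the subgame `W`, whose highest priority is `b`, has a
`b`-decomposition for Dis.  (The disjunctions in the textbook definition are
split into separate constructors, and "`X` is empty or recursively has a
decomposition" is encoded as `X.Nonempty → DisDecomp G _ X`.) -/
inductive DisDecomp (G : MPPGame V) : ℕ → Set V → Prop where
  | even (b b' : ℕ) (W R T B : Set V) (τ : V → V)
      (hb : Even b) (hsub : G.IsSubgame W)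
      (hpart : Partition3 W R T B)
      (hB : B = {v | v ∈ W ∧ G.pri v = b}) (hBne : B.Nonempty)
      (htop : ∀ v ∈ W, G.pri v ≤ b)
      (hreach : G.DisReach W T B τ)
      (hb' : R.Nonempty → b' < b)
      (hR : R.Nonempty → DisDecomp G b' R) :
      DisDecomp G b W
  | oddRec (b b' b'' : ℕ) (W U T R : Set V) (τ : V → V)
      (hb : Odd b) (hsub : G.IsSubgame W)
      (hpart : Partition3 W U T R)
      (htop : ∀ v ∈ W, G.pri v ≤ b) (htop' : ∃ v ∈ W, G.pri v = b)
      (hRne : R.Nonempty) (htrap : G.TrapForConIn W R)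
      (hb1 : b' < b) (hR : DisDecomp G b' R)
      (hreach : G.DisReach W T R τ)
      (hb2 : U.Nonempty → b'' ≤ b)
      (hU : U.Nonempty → DisDecomp G b'' U) :
      DisDecomp G b W
  | oddMP (b b'' : ℕ) (W U T R : Set V) (τ σ : V → V)
      (hb : Odd b) (hsub : G.IsSubgame W)
      (hpart : Partition3 W U T R)
      (htop : ∀ v ∈ W, G.pri v ≤ b) (htop' : ∃ v ∈ W, G.pri v = b)
      (hRne : R.Nonempty) (htrap : G.TrapForConIn W R)
      (hsig : G.DisMPWin R σ)
      (hreach : G.DisReach W T R τ)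
      (hb2 : U.Nonempty → b'' ≤ b)
      (hU : U.Nonempty → DisDecomp G b'' U) :
      DisDecomp G b W

/-- `ConDecomp G b W` : the subgame `W`, whose highest priority is `b`, has a
`b`-decomposition for Con.  ("`X` is empty or recursively has a decomposition"
is encoded as `X.Nonempty → ConDecomp G _ X`.) -/
inductive ConDecomp (G : MPPGame V) : ℕ → Set V → Prop where
  | odd (b b' : ℕ) (W R T B : Set V) (τ lam : V → V)
      (hb : Odd b) (hsub : G.IsSubgame W)
      (hpart : Partition3 W R T B)
      (hB : B = {v | v ∈ W ∧ G.pri v = b}) (hBne : B.Nonempty)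
      (htop : ∀ v ∈ W, G.pri v ≤ b)
      (hreach : G.ConReach W T B τ)
      (hb' : R.Nonempty → b' < b)
      (hR : R.Nonempty → ConDecomp G b' R)
      (hlam : G.ConMPWin W lam) :
      ConDecomp G b W
  | even (b b' b'' : ℕ) (W U T R : Set V) (τ : V → V)
      (hb : Even b) (hsub : G.IsSubgame W)
      (hpart : Partition3 W U T R)
      (htop : ∀ v ∈ W, G.pri v ≤ b) (htop' : ∃ v ∈ W, G.pri v = b)
      (hRne : R.Nonempty) (htrap : G.TrapForDisIn W R)
      (hb1 : b' < b) (hR : ConDecomp G b' R)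
      (hreach : G.ConReach W T R τ)
      (hb2 : U.Nonempty → b'' ≤ b)
      (hU : U.Nonempty → ConDecomp G b'' U) :
      ConDecomp G b W

/-- The maximum absolute value of the cost of an edge of the subgame induced
by `W` (and `0` if there is none). -/
noncomputable def maxCostOn (G : MPPGame V) (W : Set V) : ℕ :=
  sSup {n : ℕ | ∃ v ∈ W, ∃ u ∈ W, G.edge v u ∧ n = (G.cost v u).natAbs}

/-- The edge `(v, u)` is progressive in the progress labelling `(μ, φ)`
(with priorities bounded by the even number `d`, over an ordered set with
strict order `lt`). -/
def Progressive {M : Type} (G : MPPGame V) (d : ℕ) (lt : M → M → Prop)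
    (μ : V → List M) (φ : V → WithTop ℤ) (v u : V) : Prop :=
  seqLt lt (trunc d (G.pri v) (μ u)) (μ v) ∨
  (trunc d (G.pri v) (μ u) = μ v ∧ Even (G.pri v) ∧ φ v = ⊤) ∨
  (μ u = μ v ∧ φ v ≠ ⊤ ∧ φ u ≤ φ v + (G.cost v u : WithTop ℤ))

/-- `(μ, φ)` is a progress labelling on the subgame induced by `W`:
`μ v` represents the sequence `⟨m_{d-1}, m_{d-3}, …, m_ℓ⟩` (so that
`d + 1 = 2·(μ v).length + ℓ` with `ℓ` odd and `ℓ ≥ π(v)`);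
if `φ v = ∞` then `ℓ` is the least odd integer `≥ π(v)`; and if `φ v ≠ ∞`
then `0 ≤ φ v ≤ n·C`, where `n` is the number of vertices of the subgame and
`C` the maximum absolute value of an edge cost of the subgame. -/
def IsProgressLabellingOn {M : Type} (G : MPPGame V) (W : Set V) (d : ℕ)
    (μ : V → List M) (φ : V → WithTop ℤ) : Prop :=
  ∀ v ∈ W,
    (∃ l, Odd l ∧ G.pri v ≤ l ∧ d + 1 = 2 * (μ v).length + l) ∧
    (φ v = ⊤ → d + 1 ≤ 2 * (μ v).length + G.pri v + 1) ∧
    (φ v ≠ ⊤ → 0 ≤ φ v ∧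
      φ v ≤ (((W.ncard * G.maxCostOn W : ℕ) : ℤ) : WithTop ℤ))

/-- `(μ, φ)` is a progress measure on the subgame induced by `W`: a progress
labelling such that every Dis vertex has a progressive outgoing edge in the
subgame, and every outgoing edge of a Con vertex in the subgame is progressive. -/
def IsProgressMeasureOn {M : Type} (G : MPPGame V) (W : Set V) (d : ℕ)
    (lt : M → M → Prop) (μ : V → List M) (φ : V → WithTop ℤ) : Prop :=
  G.IsProgressLabellingOn W d μ φ ∧
  (∀ v ∈ W, G.disOwns v → ∃ u ∈ W, G.edge v u ∧ G.Progressive d lt μ φ v u) ∧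
  (∀ v ∈ W, ¬ G.disOwns v → ∀ u ∈ W, G.edge v u → G.Progressive d lt μ φ v u)

end MPPGame

/-! ### Auxiliary development -/

section Aux

open MPPGame

variable {V M : Type}

/-- Truncation (`List.take`) is monotone (non-strictly) for the lexicographic order. -/
theorem lex_take_mono {lt : M → M → Prop} {s t : List M} (h : List.Lex lt s t) :
    ∀ k, List.Lex lt (s.take k) (t.take k) ∨ s.take k = t.take k := by
  induction h with
  | nil =>
    intro k
    cases k with
    | zero => exact Or.inr rfl
    | succ k => exact Or.inl List.Lex.nil
  | @cons a l₁ l₂ h ih =>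
    intro k
    cases k with
    | zero => exact Or.inr rfl
    | succ k =>
      rcases ih k with h' | h'
      · exact Or.inl (List.Lex.cons h')
      · exact Or.inr (by simp [List.take_succ_cons, h'])
  | @rel a₁ l₁ a₂ l₂ h =>
    intro k
    cases k with
    | zero => exact Or.inr rfl
    | succ k => exact Or.inl (List.Lex.rel h)

/-- If `s < t` lexicographically and `t` has length at most `k`, then `s.take k < t`. -/
theorem lex_take_left {lt : M → M → Prop} {s t : List M} (h : List.Lex lt s t) :
    ∀ {k}, t.length ≤ k → List.Lex lt (s.take k) t := by
  induction h with
  | nil =>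
    intro k _
    simp only [List.take_nil]
    exact List.Lex.nil
  | @cons a l₁ l₂ h ih =>
    intro k hk
    cases k with
    | zero => simp at hk
    | succ k => exact List.Lex.cons (ih (by simpa using hk))
  | @rel a₁ l₁ a₂ l₂ h =>
    intro k hk
    cases k with
    | zero => simp at hk
    | succ k => exact List.Lex.rel h

/-- A "progress measure without the upper bound on `φ`", which is what the
induction actually maintains. -/
def PM' (G : MPPGame V) (W : Set V) (d : ℕ) (lt : M → M → Prop)
    (μ : V → List M) (φ : V → WithTop ℤ) : Prop :=
  (∀ v ∈ W, ∃ l, Odd l ∧ G.pri v ≤ l ∧ d + 1 = 2 * (μ v).length + l) ∧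
  (∀ v ∈ W, φ v ≠ ⊤ → 0 ≤ φ v) ∧
  (∀ v ∈ W, G.disOwns v → ∃ u ∈ W, G.edge v u ∧ G.Progressive d lt μ φ v u) ∧
  (∀ v ∈ W, ¬ G.disOwns v → ∀ u ∈ W, G.edge v u → G.Progressive d lt μ φ v u)

theorem pm'_length {G : MPPGame V} {W : Set V} {d : ℕ} {lt : M → M → Prop}
    {μ : V → List M} {φ : V → WithTop ℤ} (pm : PM' G W d lt μ φ)
    {v : V} (hv : v ∈ W) : (μ v).length ≤ (d + 1 - G.pri v) / 2 := by
  obtain ⟨l, _, hl, heq⟩ := pm.1 v hv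
  omega

theorem pm'_restrict {G : MPPGame V} {W R : Set V} {d : ℕ} {lt : M → M → Prop}
    {μ : V → List M} {φ : V → WithTop ℤ} (pm : PM' G W d lt μ φ) (hRW : R ⊆ W)
    (hclose : ∀ v ∈ R, G.disOwns v → ∀ u ∈ W, G.edge v u →
      G.Progressive d lt μ φ v u → u ∈ R) :
    PM' G R d lt μ φ := by
  refine ⟨fun v hv => pm.1 v (hRW hv), fun v hv => pm.2.1 v (hRW hv),
    fun v hv hd => ?_, fun v hv hd u hu he => pm.2.2.2 v (hRW hv) hd u (hRW hu) he⟩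
  obtain ⟨u, huW, he, hp⟩ := pm.2.2.1 v (hRW hv) hd
  exact ⟨u, hclose v hv hd u huW he hp, he, hp⟩

/-- From every vertex of a subgame with a `PM'` there is a progressive edge
inside the subgame. -/
theorem pm'_exists_prog {G : MPPGame V} {W : Set V} {d : ℕ} {lt : M → M → Prop}
    {μ : V → List M} {φ : V → WithTop ℤ} (hsub : G.IsSubgame W)
    (pm : PM' G W d lt μ φ) {v : V} (hv : v ∈ W) :
    ∃ u ∈ W, G.edge v u ∧ G.Progressive d lt μ φ v u := by
  by_cases hd : G.disOwns v
  · exact pm.2.2.1 v hv hd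
  · obtain ⟨u, huW, he⟩ := hsub.2 v hv
    exact ⟨u, huW, he, pm.2.2.2 v hv hd u huW he⟩

/-- Closure of the minimal `trunc`-class under progressive edges. -/
theorem closure_C0 {G : MPPGame V} {d b : ℕ} {lt : M → M → Prop}
    {μ : V → List M} {φ : V → WithTop ℤ} {t : List M} {v u : V}
    (hpb : G.pri v ≤ b) (hbd : b ≤ d)
    (hprog : G.Progressive d lt μ φ v u)
    (hvt : trunc d b (μ v) = t)
    (hminu : ¬ List.Lex lt (trunc d b (μ u)) t) :
    trunc d b (μ u) = t := by
  have hkk' : (d + 1 - b) / 2 ≤ (d + 1 - G.pri v) / 2 :=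
    Nat.div_le_div_right (by omega)
  have hcomp : ∀ s : List M, (trunc d (G.pri v) s).take ((d + 1 - b) / 2) = trunc d b s := by
    intro s
    simp only [trunc, List.take_take]
    rw [Nat.min_eq_left hkk']
  rcases hprog with h | ⟨h, _⟩ | ⟨h, _⟩
  · rcases lex_take_mono h ((d + 1 - b) / 2) with h' | h'
    · rw [hcomp] at h'
      exact absurd (by rwa [show (μ v).take ((d+1-b)/2) = trunc d b (μ v) from rfl, hvt] at h')
        hminu
    · rw [hcomp] at h'
      rw [h', show (μ v).take ((d+1-b)/2) = trunc d b (μ v) from rfl, hvt]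
  · have := congrArg (fun s : List M => s.take ((d + 1 - b) / 2)) h
    rw [hcomp] at this
    rw [this, show (μ v).take ((d+1-b)/2) = trunc d b (μ v) from rfl, hvt]
  · rw [show trunc d b (μ u) = (μ u).take ((d+1-b)/2) from rfl, h,
      show (μ v).take ((d+1-b)/2) = trunc d b (μ v) from rfl, hvt]

/-- Key closure property of the mean-payoff region. -/
theorem closure_R {G : MPPGame V} {d b : ℕ} {lt : M → M → Prop}
    {μ : V → List M} {φ : V → WithTop ℤ} {t : List M} {v u : V}
    (hpb : G.pri v ≤ b) (hbd : b ≤ d)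
    (htlen : t.length ≤ (d + 1 - b) / 2)
    (hprog : G.Progressive d lt μ φ v u)
    (hvt : μ v = t)
    (hne : φ v ≠ ⊤ ∨ ¬ Even (G.pri v))
    (hminu : ¬ List.Lex lt (trunc d b (μ u)) t) :
    μ u = t ∧ φ v ≠ ⊤ ∧ φ u ≤ φ v + (G.cost v u : WithTop ℤ) ∧ φ u ≠ ⊤ := by
  have hkk' : (d + 1 - b) / 2 ≤ (d + 1 - G.pri v) / 2 :=
    Nat.div_le_div_right (by omega)
  have hcomp : (trunc d (G.pri v) (μ u)).take ((d + 1 - b) / 2) = trunc d b (μ u) := by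
    simp only [trunc, List.take_take]
    rw [Nat.min_eq_left hkk']
  rcases hprog with h | ⟨_, hev, htop⟩ | ⟨h1, h2, h3⟩
  · rw [hvt] at h
    have := lex_take_left h htlen
    rw [hcomp] at this
    exact absurd this hminu
  · rcases hne with hne | hne
    · exact absurd htop hne
    · exact absurd hev hne
  · refine ⟨by rw [h1, hvt], h2, h3, ?_⟩
    have : φ v + (G.cost v u : WithTop ℤ) ≠ ⊤ :=
      WithTop.add_ne_top.2 ⟨h2, WithTop.coe_ne_top⟩
    exact ne_top_of_le_ne_top this h3

/-- Attractor computation: iterated one-step attractor. -/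
def attrN (G : MPPGame V) (W B : Set V) : ℕ → Set V
  | 0 => B
  | n + 1 => attrN G W B n ∪
      {v | v ∈ W ∧ ((G.disOwns v ∧ ∃ u ∈ attrN G W B n, G.edge v u) ∨
        (¬ G.disOwns v ∧ ∀ u ∈ W, G.edge v u → u ∈ attrN G W B n))}

theorem attrN_mono (G : MPPGame V) (W B : Set V) : ∀ {m n : ℕ}, m ≤ n →
    attrN G W B m ⊆ attrN G W B n := by
  intro m n h
  induction h with
  | refl => exact subset_rfl
  | step _ ih => exact ih.trans Set.subset_union_left

theorem attrN_subset (G : MPPGame V) {W B : Set V} (hBW : B ⊆ W) :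
    ∀ n, attrN G W B n ⊆ W := by
  intro n
  induction n with
  | zero => exact hBW
  | succ n ih =>
    intro v hv
    rcases hv with hv | hv
    · exact ih hv
    · exact hv.1

/-- The full attractor package: the Dis-attractor `A` of `B` in `W`, a
positional reachability strategy, and the closure properties of `W \ A`. -/
theorem attractor_main [Fintype V] [Nonempty V] (G : MPPGame V) (W B : Set V)
    (hsub : G.IsSubgame W) (hBW : B ⊆ W) :
    ∃ (A : Set V) (τ : V → V), B ⊆ A ∧ A ⊆ W ∧
      G.DisReach W (A \ B) B τ ∧
      (∀ v ∈ W \ A, G.disOwns v → ∀ u, G.edge v u → u ∈ W → u ∈ W \ A) ∧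
      (∀ v ∈ W \ A, ¬ G.disOwns v → ∃ u ∈ W \ A, G.edge v u) := by
  classical
  set A : Set V := {v | ∃ n, v ∈ attrN G W B n} with hAdef
  have hAW : A ⊆ W := fun v ⟨n, hn⟩ => attrN_subset G hBW n hn
  have hBA : B ⊆ A := fun v hv => ⟨0, hv⟩
  have hDwit : ∀ v, (v ∈ A ∧ v ∉ B ∧ G.disOwns v) →
      ∃ u, G.edge v u ∧ ∃ r, u ∈ attrN G W B r ∧ v ∉ attrN G W B r := by
    rintro v ⟨⟨n, hn⟩, hvB, hvd⟩
    have hex : ∃ m, v ∈ attrN G W B m := ⟨n, hn⟩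
    have hrpos : Nat.find hex ≠ 0 := by
      intro h0
      have hspec := Nat.find_spec hex
      rw [h0] at hspec
      exact hvB hspec
    obtain ⟨r', hr'⟩ : ∃ r', Nat.find hex = r' + 1 := ⟨Nat.find hex - 1, by omega⟩
    have hmem := Nat.find_spec hex
    rw [hr'] at hmem
    have hnot : v ∉ attrN G W B r' := Nat.find_min hex (by omega)
    rcases hmem with hmem | hmem
    · exact absurd hmem hnot
    · rcases hmem.2 with ⟨_, u, huA, hedge⟩ | ⟨hnd, _⟩
      · exact ⟨u, hedge, r', huA, hnot⟩
      · exact absurd hvd hnd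
  set τ : V → V := fun v =>
    if h : v ∈ A ∧ v ∉ B ∧ G.disOwns v then (hDwit v h).choose
    else if h2 : v ∈ W then (hsub.2 v h2).choose
    else Classical.arbitrary V with hτdef
  have hτ1 : ∀ v, (h : v ∈ A ∧ v ∉ B ∧ G.disOwns v) →
      G.edge v (τ v) ∧ ∃ r, τ v ∈ attrN G W B r ∧ v ∉ attrN G W B r := by
    intro v h
    have := (hDwit v h).choose_spec
    rw [hτdef]
    simpa [dif_pos h] using this
  have hτ2 : ∀ v ∈ W, ¬ (v ∈ A ∧ v ∉ B ∧ G.disOwns v) → τ v ∈ W ∧ G.edge v (τ v) := by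
    intro v hvW h
    have := (hsub.2 v hvW).choose_spec
    rw [hτdef]
    simp only [dif_neg h, dif_pos hvW]
    exact ⟨this.1, this.2⟩
  have hτlegal : ∀ v ∈ W, G.disOwns v → G.edge v (τ v) ∧ τ v ∈ W := by
    intro v hvW hvd
    by_cases h : v ∈ A ∧ v ∉ B ∧ G.disOwns v
    · obtain ⟨he, r, hmem, _⟩ := hτ1 v h
      exact ⟨he, attrN_subset G hBW r hmem⟩
    · have := hτ2 v hvW h
      exact ⟨this.2, this.1⟩
  have hreachN : ∀ n, ∀ p : ℕ → V, G.PlayIn W p → G.ConsistentDisPos τ p →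
      p 0 ∈ attrN G W B n → ∃ i, p i ∈ B := by
    intro n
    induction n with
    | zero => exact fun p _ _ h0 => ⟨0, h0⟩
    | succ n ih =>
      intro p hp hc h0
      by_cases hB0 : p 0 ∈ B
      · exact ⟨0, hB0⟩
      by_cases hn0 : p 0 ∈ attrN G W B n
      · exact ih p hp hc hn0
      have h1 : p 1 ∈ attrN G W B n := by
        rcases h0 with h0 | h0
        · exact absurd h0 hn0
        · rcases h0.2 with ⟨hd, _⟩ | ⟨hnd, hall⟩
          · have hcons := hc 0 hd
            have hh : p 0 ∈ A ∧ p 0 ∉ B ∧ G.disOwns (p 0) :=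
              ⟨⟨n + 1, Or.inr h0⟩, hB0, hd⟩
            obtain ⟨_, r, hmem, hnmem⟩ := hτ1 (p 0) hh
            have hrn : r ≤ n := by
              by_contra hgt
              have hmem1 : p 0 ∈ attrN G W B (n + 1) := Or.inr h0
              exact hnmem (attrN_mono G W B (by omega : n + 1 ≤ r) hmem1)
            rw [hcons]
            exact attrN_mono G W B hrn hmem
          · exact hall (p 1) (hp.1 1) (hp.2 0)
      obtain ⟨i, hi⟩ := ih (fun j => p (j + 1))
        ⟨fun j => hp.1 (j + 1), fun j => hp.2 (j + 1)⟩ (fun j hj => hc (j + 1) hj) h1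
      exact ⟨i + 1, hi⟩
  refine ⟨A, τ, hBA, hAW, ⟨hτlegal, ?_⟩, ?_, ?_⟩
  · rintro p hp ⟨⟨n, hn⟩, _⟩ hcons
    exact hreachN n p hp hcons hn
  · rintro v ⟨hvW, hvA⟩ hvd u hedge huW
    refine ⟨huW, fun huA => hvA ?_⟩
    obtain ⟨n, hn⟩ := huA
    exact ⟨n + 1, Or.inr ⟨hvW, Or.inl ⟨hvd, u, hn, hedge⟩⟩⟩
  · rintro v ⟨hvW, hvA⟩ hvd
    by_contra hnone
    push_neg at hnone
    have hall : ∀ u, u ∈ W → G.edge v u → ∃ n, u ∈ attrN G W B n := by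
      intro u huW hedge
      by_contra hnA
      exact hnone u ⟨huW, hnA⟩ hedge
    have huniform : ∃ N, ∀ u ∈ W, G.edge v u → u ∈ attrN G W B N := by
      set g : V → ℕ := fun u =>
        if h : ∃ n, u ∈ attrN G W B n then Nat.find h else 0 with hg
      refine ⟨Finset.univ.sup g, fun u huW hedge => ?_⟩
      have h' := hall u huW hedge
      have hspec := Nat.find_spec h'
      have hle : g u ≤ Finset.univ.sup g := Finset.le_sup (Finset.mem_univ u)
      have hgu : g u = Nat.find h' := by rw [hg]; simp only [dif_pos h']
      exact attrN_mono G W B (by omega) hspec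
    obtain ⟨N, hN⟩ := huniform
    exact hvA ⟨N + 1, Or.inr ⟨hvW, Or.inr ⟨hvd, hN⟩⟩⟩

/-- Every strategy decomposition's index is realized as a priority. -/
theorem decomp_realizes {G : MPPGame V} {b : ℕ} {W : Set V}
    (h : G.DisDecomp b W) : ∃ v ∈ W, G.pri v = b := by
  cases h with
  | even b b' W R T B τ hb hsub hpart hB hBne htop hreach hb' hR =>
    obtain ⟨v, hv⟩ := hBne
    rw [hB] at hv
    exact ⟨v, hv.1, hv.2⟩
  | oddRec b b' b'' W U T R τ hb hsub hpart htop htop' => exact htop'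
  | oddMP b b'' W U T R τ σ hb hsub hpart htop htop' => exact htop'

/-- The mean payoff of a play along which a nonnegative integer potential
decreases by at most the cost at each step is nonnegative. -/
theorem mp_nonneg [Fintype V] (G : MPPGame V) (p : ℕ → V)
    (ψ : ℕ → ℤ) (hψ0 : ∀ i, 0 ≤ ψ i)
    (hstep : ∀ i, ψ (i + 1) ≤ ψ i + G.cost (p i) (p (i + 1))) :
    0 ≤ G.meanPayoff p := by
  classical
  set K : ℕ := Finset.univ.sup fun q : V × V => (G.cost q.1 q.2).natAbs with hK
  have hcost : ∀ i, G.cost (p i) (p (i + 1)) ≤ (K : ℤ) := by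
    intro i
    have h1 : (G.cost (p i) (p (i + 1))).natAbs ≤ K := by
      rw [hK]
      exact Finset.le_sup (f := fun q : V × V => (G.cost q.1 q.2).natAbs)
        (Finset.mem_univ (p i, p (i + 1)))
    calc G.cost (p i) (p (i + 1)) ≤ ((G.cost (p i) (p (i + 1))).natAbs : ℤ) := Int.le_natAbs
      _ ≤ (K : ℤ) := by exact_mod_cast h1
  set S : ℕ → ℤ := fun N => ∑ i ∈ Finset.range N, G.cost (p i) (p (i + 1)) with hS
  have hS1 : ∀ N, ψ N ≤ ψ 0 + S N := by
    intro N
    induction N with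
    | zero => simp [hS]
    | succ N ih =>
      have h1 := hstep N
      have h2 : S (N + 1) = S N + G.cost (p N) (p (N + 1)) := by
        rw [hS]; simp [Finset.sum_range_succ]
      omega
  have hSlb : ∀ N, -(ψ 0) ≤ S N := fun N => by
    have h1 := hS1 N; have h2 := hψ0 N; omega
  have hSub : ∀ N, S N ≤ (N : ℤ) * K := by
    intro N
    calc S N ≤ ∑ _i ∈ Finset.range N, (K : ℤ) := Finset.sum_le_sum fun i _ => hcost i
      _ = (N : ℤ) * K := by simp [mul_comm]
  set u : ℕ → ℝ := fun N =>
    (∑ i ∈ Finset.range N, (G.cost (p i) (p (i + 1)) : ℝ)) / (N : ℝ) with hu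
  have hueq : ∀ N, u N = (S N : ℝ) / N := by
    intro N
    rw [hu, hS]
    push_cast
    rfl
  have hlb : ∀ N, (-((ψ 0 : ℤ) : ℝ)) / N ≤ u N := by
    intro N
    rcases Nat.eq_zero_or_pos N with h0 | hpos
    · subst h0; simp [hueq]
    · rw [hueq]
      have hNpos : (0 : ℝ) < N := by exact_mod_cast hpos
      apply (div_le_div_iff_of_pos_right hNpos).2
      exact_mod_cast hSlb N
  have hub : ∀ N, u N ≤ (K : ℝ) := by
    intro N
    rcases Nat.eq_zero_or_pos N with h0 | hpos
    · subst h0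
      have h00 : u 0 = 0 := by simp [hueq]
      rw [h00]
      positivity
    · rw [hueq]
      have hNpos : (0 : ℝ) < N := by exact_mod_cast hpos
      rw [div_le_iff₀ hNpos]
      have := hSub N
      have hcast : (S N : ℝ) ≤ ((N : ℤ) * K : ℤ) := by exact_mod_cast this
      push_cast at hcast ⊢
      linarith
  have hψ0' : (0 : ℝ) ≤ ((ψ 0 : ℤ) : ℝ) := by exact_mod_cast hψ0 0
  have hlb' : ∀ N, -((ψ 0 : ℤ) : ℝ) ≤ u N := by
    intro N
    rcases Nat.eq_zero_or_pos N with h0 | hpos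
    · subst h0
      have : u 0 = 0 := by simp [hueq]
      rw [this]; linarith
    · refine le_trans ?_ (hlb N)
      rw [neg_div]
      have hN1 : (1 : ℝ) ≤ N := by exact_mod_cast hpos
      have : ((ψ 0 : ℤ) : ℝ) / N ≤ ((ψ 0 : ℤ) : ℝ) := div_le_self hψ0' hN1
      linarith
  have hbdd_above : Filter.IsBoundedUnder (· ≤ ·) Filter.atTop u :=
    Filter.isBoundedUnder_of ⟨(K : ℝ), hub⟩
  have hbdd_below : Filter.IsBoundedUnder (· ≥ ·) Filter.atTop u :=
    Filter.isBoundedUnder_of ⟨-((ψ 0 : ℤ) : ℝ), fun N => hlb' N⟩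
  have hv0 : Filter.Tendsto (fun N : ℕ => (-((ψ 0 : ℤ) : ℝ)) / N)
      Filter.atTop (nhds 0) := tendsto_const_div_atTop_nhds_zero_nat _
  have hliminf_v : Filter.liminf (fun N : ℕ => (-((ψ 0 : ℤ) : ℝ)) / N) Filter.atTop = 0 :=
    hv0.liminf_eq
  have hstep1 : Filter.liminf (fun N : ℕ => (-((ψ 0 : ℤ) : ℝ)) / N) Filter.atTop ≤
      Filter.liminf u Filter.atTop := by
    have hvlb : ∀ N : ℕ, -((ψ 0 : ℤ) : ℝ) ≤ -((ψ 0 : ℤ) : ℝ) / N := by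
      intro N
      rcases Nat.eq_zero_or_pos N with h0 | hpos
      · subst h0
        rw [Nat.cast_zero, div_zero]
        linarith
      · rw [neg_div]
        have hN1 : (1 : ℝ) ≤ N := by exact_mod_cast hpos
        have := div_le_self hψ0' hN1
        linarith
    refine Filter.liminf_le_liminf (Filter.Eventually.of_forall hlb) ?_ ?_
    · exact Filter.isBoundedUnder_of ⟨-((ψ 0 : ℤ) : ℝ), fun N => hvlb N⟩
    · exact hbdd_above.isCoboundedUnder_ge
  have hstep2 : Filter.liminf u Filter.atTop ≤ Filter.limsup u Filter.atTop :=
    Filter.liminf_le_limsup hbdd_above hbdd_below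
  have : (0 : ℝ) ≤ Filter.limsup u Filter.atTop := by
    rw [← hliminf_v]
    exact le_trans hstep1 hstep2
  exact this

/-- The main induction: a subgame carrying a `PM'` has a strategy
decomposition for Dis. -/
theorem pm_decomp [Fintype V] [Nonempty V] (G : MPPGame V)
    (d : ℕ) (lt : M → M → Prop) (hSTO : IsStrictTotalOrder M lt)
    (μ : V → List M) (φ : V → WithTop ℤ) :
    ∀ n (W : Set V), W.ncard ≤ n → G.IsSubgame W → (∀ v ∈ W, G.pri v ≤ d) →
      PM' G W d lt μ φ → ∃ b, G.DisDecomp b W := by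
  classical
  haveI : IsStrictTotalOrder M lt := hSTO
  intro n
  induction n with
  | zero =>
    intro W hcard hsub _ _
    have := Set.ncard_pos (Set.toFinite W) |>.2 hsub.1
    omega
  | succ n ih =>
    intro W hcard hsub hpriW pm
    obtain ⟨v0, hv0W, hv0max⟩ := Set.exists_max_image W G.pri (Set.toFinite W) hsub.1
    set b := G.pri v0 with hbdef
    have hbd : b ≤ d := hpriW v0 hv0W
    have htopW : ∀ v ∈ W, G.pri v ≤ b := hv0max
    by_cases hbev : Even b
    · -- even top priority
      set B : Set V := {v | v ∈ W ∧ G.pri v = b} with hBdef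
      have hBne : B.Nonempty := ⟨v0, hv0W, rfl⟩
      have hBW : B ⊆ W := fun v hv => hv.1
      obtain ⟨A, τ, hBA, hAW, hreach, hcompDis, hcompCon⟩ :=
        attractor_main G W B hsub hBW
      set R : Set V := W \ A with hRdef
      set T : Set V := A \ B with hTdef
      have hpart : Partition3 W R T B := by
        refine ⟨?_, ?_, ?_, ?_⟩
        · ext v
          simp only [Set.mem_union, hRdef, hTdef, Set.mem_diff]
          constructor
          · rintro ((⟨h, _⟩ | ⟨h, _⟩) | h)
            · exact h
            · exact hAW h
            · exact hBW h
          · intro hv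
            by_cases hA : v ∈ A
            · by_cases hB : v ∈ B
              · exact Or.inr hB
              · exact Or.inl (Or.inr ⟨hA, hB⟩)
            · exact Or.inl (Or.inl ⟨hv, hA⟩)
        · rw [Set.disjoint_left]
          rintro v ⟨_, hA⟩ ⟨hA', _⟩
          exact hA hA'
        · rw [Set.disjoint_left]
          rintro v ⟨_, hA⟩ hB
          exact hA (hBA hB)
        · rw [Set.disjoint_left]
          rintro v ⟨_, hB⟩ hB'
          exact hB hB'
      by_cases hRne : R.Nonempty
      · have hRW : R ⊆ W := Set.diff_subset
        have hRsub : G.IsSubgame R := by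
          refine ⟨hRne, fun v hv => ?_⟩
          by_cases hd : G.disOwns v
          · obtain ⟨u, huW, he⟩ := hsub.2 v hv.1
            exact ⟨u, hcompDis v hv hd u he huW, he⟩
          · exact hcompCon v hv hd
        have hRpm : PM' G R d lt μ φ :=
          pm'_restrict pm hRW fun v hv hd u huW he _ => hcompDis v hv hd u he huW
        have hRcard : R.ncard ≤ n := by
          have hss : R ⊂ W := ⟨hRW, fun hWR => ((hWR hv0W).2 (hBA ⟨hv0W, rfl⟩))⟩
          have := Set.ncard_lt_ncard hss (Set.toFinite W)
          omega
        obtain ⟨b', hb'dec⟩ := ih R hRcard hRsub (fun v hv => hpriW v (hRW hv)) hRpm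
        have hb'lt : b' < b := by
          obtain ⟨w, hwR, hwpri⟩ := decomp_realizes hb'dec
          have h1 : G.pri w ≤ b := htopW w (hRW hwR)
          have h2 : G.pri w ≠ b := fun hh => hwR.2 (hBA ⟨hRW hwR, hh⟩)
          omega
        exact ⟨b, DisDecomp.even b b' W R T B τ hbev hsub hpart rfl hBne htopW
          hreach (fun _ => hb'lt) (fun _ => hb'dec)⟩
      · exact ⟨b, DisDecomp.even b 0 W R T B τ hbev hsub hpart rfl hBne htopW
          hreach (fun h => absurd h hRne) (fun h => absurd h hRne)⟩
    · -- odd top priority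
      have hbodd : Odd b := Nat.odd_iff.2 (by
        rcases Nat.even_or_odd b with h | h
        · exact absurd h hbev
        · exact Nat.odd_iff.1 h)
      -- minimal truncation class
      set f : V → List M := fun v => trunc d b (μ v) with hfdef
      set rV : V → V → Prop := fun v w => List.Lex lt (f v) (f w) with hrVdef
      haveI hLT : IsTrans (List M) (List.Lex lt) :=
        (isStrictWeakOrder_of_isOrderConnected (α := List M) (r := List.Lex lt)).toIsTrans
      haveI hT : IsTrans V rV := ⟨fun a bb c hab hbc => hLT.trans _ _ _ hab hbc⟩
      haveI hI : IsIrrefl V rV := ⟨fun a h => irrefl (f a) h⟩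
      have hwf : WellFounded rV := Finite.wellFounded_of_trans_of_irrefl rV
      obtain ⟨vm, hvmW, hvmmin⟩ := hwf.has_min W hsub.1
      set t : List M := f vm with htdef
      have hmin : ∀ u ∈ W, ¬ List.Lex lt (trunc d b (μ u)) t := fun u hu h =>
        hvmmin u hu h
      have htlen : t.length ≤ (d + 1 - b) / 2 := by
        rw [htdef, hfdef]
        simp only [trunc]
        rw [List.length_take]
        omega
      have hself : ∀ v ∈ W, G.pri v = b → μ v = trunc d b (μ v) := by
        intro v hv hp
        have hlen := pm'_length pm hv
        rw [hp] at hlen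
        exact (List.take_of_length_le hlen).symm
      set C0 : Set V := {v | v ∈ W ∧ trunc d b (μ v) = t} with hC0def
      have hC0W : C0 ⊆ W := fun v hv => hv.1
      have hvmC0 : vm ∈ C0 := ⟨hvmW, rfl⟩
      have hC0ne : C0.Nonempty := ⟨vm, hvmC0⟩
      have hC0close : ∀ v ∈ C0, ∀ u ∈ W, G.Progressive d lt μ φ v u → u ∈ C0 := by
        intro v hv u hu hp
        exact ⟨hu, closure_C0 (htopW v hv.1) hbd hp hv.2 (hmin u hu)⟩
      have htop' : ∃ v ∈ W, G.pri v = b := ⟨v0, hv0W, rfl⟩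
      by_cases hcase : ∃ v ∈ C0, G.pri v = b
      · -- mean-payoff region
        obtain ⟨w0, hw0C0, hw0b⟩ := hcase
        set R : Set V := {v | v ∈ W ∧ μ v = t ∧ φ v ≠ ⊤} with hRdef
        have hRW : R ⊆ W := fun v hv => hv.1
        have hRclose : ∀ v ∈ R, ∀ u ∈ W, G.Progressive d lt μ φ v u →
            u ∈ R ∧ φ u ≤ φ v + (G.cost v u : WithTop ℤ) := by
          intro v hv u hu hp
          obtain ⟨h1, _, h3, h4⟩ := closure_R (htopW v hv.1) hbd htlen hp hv.2.1
            (Or.inl hv.2.2) (hmin u hu)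
          exact ⟨⟨hu, h1, h4⟩, h3⟩
        have hw0μ : μ w0 = t := by
          have := hself w0 hw0C0.1 hw0b
          rw [this, hw0C0.2]
        have hw0R : w0 ∈ R := by
          obtain ⟨u, huW, he, hp⟩ := pm'_exists_prog hsub pm hw0C0.1
          have hne : φ w0 ≠ ⊤ ∨ ¬ Even (G.pri w0) := Or.inr (by
            rw [hw0b]; exact hbev)
          obtain ⟨_, h2, _, _⟩ := closure_R (htopW w0 hw0C0.1) hbd htlen hp hw0μ hne
            (hmin u huW)
          exact ⟨hw0C0.1, hw0μ, h2⟩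
        have hRne : R.Nonempty := ⟨w0, hw0R⟩
        have htrap : G.TrapForConIn W R := by
          intro v hv
          constructor
          · intro hnd u huW he
            exact (hRclose v hv u huW (pm.2.2.2 v hv.1 hnd u huW he)).1
          · intro hd
            obtain ⟨u, huW, he, hp⟩ := pm.2.2.1 v hv.1 hd
            exact ⟨u, (hRclose v hv u huW hp).1, he⟩
        -- the mean-payoff strategy
        set σ : V → V := fun v =>
          if h : v ∈ W ∧ G.disOwns v then (pm.2.2.1 v h.1 h.2).choose
          else Classical.arbitrary V with hσdef
        have hσspec : ∀ v, (h : v ∈ W ∧ G.disOwns v) →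
            σ v ∈ W ∧ G.edge v (σ v) ∧ G.Progressive d lt μ φ v (σ v) := by
          intro v h
          have := (pm.2.2.1 v h.1 h.2).choose_spec
          rw [hσdef]
          simpa [dif_pos h] using this
        have hsig : G.DisMPWin R σ := by
          constructor
          · intro v hv hd
            obtain ⟨h1, h2, h3⟩ := hσspec v ⟨hv.1, hd⟩
            exact ⟨h2, (hRclose v hv (σ v) h1 h3).1⟩
          · intro p hp hc
            have hpR : ∀ i, p i ∈ R := hp.1
            have hprog : ∀ i, G.Progressive d lt μ φ (p i) (p (i + 1)) := by
              intro i
              by_cases hd : G.disOwns (p i)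
              · have := hc i hd
                rw [this]
                exact (hσspec (p i) ⟨(hpR i).1, hd⟩).2.2
              · exact pm.2.2.2 (p i) (hpR i).1 hd (p (i + 1)) (hpR (i + 1)).1 (hp.2 i)
            have hfin : ∀ i, φ (p i) ≠ ⊤ := fun i => (hpR i).2.2
            set ψ : ℕ → ℤ := fun i => (φ (p i)).untop (hfin i) with hψdef
            have hψeq : ∀ i, ((ψ i : ℤ) : WithTop ℤ) = φ (p i) := fun i =>
              WithTop.coe_untop _ _
            have hψ0 : ∀ i, 0 ≤ ψ i := by
              intro i
              have h0 := pm.2.1 (p i) (hpR i).1 (hfin i)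
              rw [← hψeq i] at h0
              exact_mod_cast h0
            have hψstep : ∀ i, ψ (i + 1) ≤ ψ i + G.cost (p i) (p (i + 1)) := by
              intro i
              have := (hRclose (p i) (hpR i) (p (i + 1)) (hpR (i + 1)).1 (hprog i)).2
              rw [← hψeq i, ← hψeq (i + 1)] at this
              exact_mod_cast this
            exact mp_nonneg G p ψ hψ0 hψstep
        obtain ⟨A, τ, hRA, hAW, hreach, hcompDis, hcompCon⟩ :=
          attractor_main G W R hsub hRW
        set U : Set V := W \ A with hUdef
        set T : Set V := A \ R with hTdef
        have hpart : Partition3 W U T R := by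
          refine ⟨?_, ?_, ?_, ?_⟩
          · ext v
            simp only [Set.mem_union, hUdef, hTdef, Set.mem_diff]
            constructor
            · rintro ((⟨h, _⟩ | ⟨h, _⟩) | h)
              · exact h
              · exact hAW h
              · exact hRW h
            · intro hv
              by_cases hA : v ∈ A
              · by_cases hR : v ∈ R
                · exact Or.inr hR
                · exact Or.inl (Or.inr ⟨hA, hR⟩)
              · exact Or.inl (Or.inl ⟨hv, hA⟩)
          · rw [Set.disjoint_left]
            rintro v ⟨_, hA⟩ ⟨hA', _⟩
            exact hA hA'
          · rw [Set.disjoint_left]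
            rintro v ⟨_, hA⟩ hR
            exact hA (hRA hR)
          · rw [Set.disjoint_left]
            rintro v ⟨_, hR⟩ hR'
            exact hR hR'
        by_cases hUne : U.Nonempty
        · have hUW : U ⊆ W := Set.diff_subset
          have hUsub : G.IsSubgame U := by
            refine ⟨hUne, fun v hv => ?_⟩
            by_cases hd : G.disOwns v
            · obtain ⟨u, huW, he⟩ := hsub.2 v hv.1
              exact ⟨u, hcompDis v hv hd u he huW, he⟩
            · exact hcompCon v hv hd
          have hUpm : PM' G U d lt μ φ :=
            pm'_restrict pm hUW fun v hv hd u huW he _ => hcompDis v hv hd u he huW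
          have hUcard : U.ncard ≤ n := by
            have hss : U ⊂ W := ⟨hUW, fun hWU => ((hWU (hRW hw0R)).2 (hRA hw0R))⟩
            have := Set.ncard_lt_ncard hss (Set.toFinite W)
            omega
          obtain ⟨b'', hb''dec⟩ := ih U hUcard hUsub (fun v hv => hpriW v (hUW hv)) hUpm
          have hb''le : b'' ≤ b := by
            obtain ⟨w, hwU, hwpri⟩ := decomp_realizes hb''dec
            have := htopW w (hUW hwU)
            omega
          exact ⟨b, DisDecomp.oddMP b b'' W U T R τ σ hbodd hsub hpart htopW htop'
            hRne htrap hsig hreach (fun _ => hb''le) (fun _ => hb''dec)⟩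
        · exact ⟨b, DisDecomp.oddMP b 0 W U T R τ σ hbodd hsub hpart htopW htop'
            hRne htrap hsig hreach (fun h => absurd h hUne) (fun h => absurd h hUne)⟩
      · -- recursive region C0, all priorities < b
        have hC0sub : G.IsSubgame C0 := by
          refine ⟨hC0ne, fun v hv => ?_⟩
          obtain ⟨u, huW, he, hp⟩ := pm'_exists_prog hsub pm hv.1
          exact ⟨u, hC0close v hv u huW hp, he⟩
        have hC0pm : PM' G C0 d lt μ φ :=
          pm'_restrict pm hC0W fun v hv _ u huW _ hp => hC0close v hv u huW hp
        have htrap : G.TrapForConIn W C0 := by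
          intro v hv
          constructor
          · intro hnd u huW he
            exact hC0close v hv u huW (pm.2.2.2 v hv.1 hnd u huW he)
          · intro hd
            obtain ⟨u, huW, he, hp⟩ := pm.2.2.1 v hv.1 hd
            exact ⟨u, hC0close v hv u huW hp, he⟩
        have hv0nC0 : v0 ∉ C0 := fun h => hcase ⟨v0, h, rfl⟩
        have hC0card : C0.ncard ≤ n := by
          have hss : C0 ⊂ W := ⟨hC0W, fun hWC => hv0nC0 (hWC hv0W)⟩
          have := Set.ncard_lt_ncard hss (Set.toFinite W)
          omega
        obtain ⟨b', hb'dec⟩ := ih C0 hC0card hC0sub (fun v hv => hpriW v (hC0W hv)) hC0pm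
        have hb'lt : b' < b := by
          obtain ⟨w, hwC0, hwpri⟩ := decomp_realizes hb'dec
          have h1 : G.pri w ≤ b := htopW w (hC0W hwC0)
          have h2 : G.pri w ≠ b := fun hh => hcase ⟨w, hwC0, hh⟩
          omega
        obtain ⟨A, τ, hRA, hAW, hreach, hcompDis, hcompCon⟩ :=
          attractor_main G W C0 hsub hC0W
        set U : Set V := W \ A with hUdef
        set T : Set V := A \ C0 with hTdef
        have hpart : Partition3 W U T C0 := by
          refine ⟨?_, ?_, ?_, ?_⟩
          · ext v
            simp only [Set.mem_union, hUdef, hTdef, Set.mem_diff]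
            constructor
            · rintro ((⟨h, _⟩ | ⟨h, _⟩) | h)
              · exact h
              · exact hAW h
              · exact hC0W h
            · intro hv
              by_cases hA : v ∈ A
              · by_cases hC : v ∈ C0
                · exact Or.inr hC
                · exact Or.inl (Or.inr ⟨hA, hC⟩)
              · exact Or.inl (Or.inl ⟨hv, hA⟩)
          · rw [Set.disjoint_left]
            rintro v ⟨_, hA⟩ ⟨hA', _⟩
            exact hA hA'
          · rw [Set.disjoint_left]
            rintro v ⟨_, hA⟩ hC
            exact hA (hRA hC)
          · rw [Set.disjoint_left]
            rintro v ⟨_, hC⟩ hC'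
            exact hC hC'
        by_cases hUne : U.Nonempty
        · have hUW : U ⊆ W := Set.diff_subset
          have hUsub : G.IsSubgame U := by
            refine ⟨hUne, fun v hv => ?_⟩
            by_cases hd : G.disOwns v
            · obtain ⟨u, huW, he⟩ := hsub.2 v hv.1
              exact ⟨u, hcompDis v hv hd u he huW, he⟩
            · exact hcompCon v hv hd
          have hUpm : PM' G U d lt μ φ :=
            pm'_restrict pm hUW fun v hv hd u huW he _ => hcompDis v hv hd u he huW
          have hUcard : U.ncard ≤ n := by
            have hss : U ⊂ W := ⟨hUW, fun hWU => ((hWU (hC0W hvmC0)).2 (hRA hvmC0))⟩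
            have := Set.ncard_lt_ncard hss (Set.toFinite W)
            omega
          obtain ⟨b'', hb''dec⟩ := ih U hUcard hUsub (fun v hv => hpriW v (hUW hv)) hUpm
          have hb''le : b'' ≤ b := by
            obtain ⟨w, hwU, hwpri⟩ := decomp_realizes hb''dec
            have := htopW w (hUW hwU)
            omega
          exact ⟨b, DisDecomp.oddRec b b' b'' W U T C0 τ hbodd hsub hpart htopW htop'
            hC0ne htrap hb'lt hb'dec hreach (fun _ => hb''le) (fun _ => hb''dec)⟩
        · exact ⟨b, DisDecomp.oddRec b b' 0 W U T C0 τ hbodd hsub hpart htopW htop'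
            hC0ne htrap hb'lt hb'dec hreach (fun h => absurd h hUne) (fun h => absurd h hUne)⟩

end Aux

/-- If there is a progress measure (over some linearly
ordered set `M`) for a game with priorities bounded by the even number `d`,
then the whole vertex set, viewed as a subgame, has a strategy decomposition
for Dis. -/
theorem progress_measure_to_dis_decomposition
    {V : Type} [Fintype V] [Nonempty V] (G : MPPGame V)
    (d : ℕ) (hd : Even d) (hpri : ∀ v, G.pri v ≤ d)
    (h : ∃ (M : Type) (lt : M → M → Prop), IsStrictTotalOrder M lt ∧
      ∃ (μ : V → List M) (φ : V → WithTop ℤ),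
        G.IsProgressMeasureOn Set.univ d lt μ φ) :
    ∃ b, G.DisDecomp b Set.univ := by
  obtain ⟨M, lt, hSTO, μ, φ, hmeas⟩ := h
  have hsub : G.IsSubgame Set.univ := by
    refine ⟨Set.univ_nonempty, fun v _ => ?_⟩
    obtain ⟨u, hu⟩ := G.exists_succ v
    exact ⟨u, Set.mem_univ u, hu⟩
  have pm : PM' G Set.univ d lt μ φ := by
    refine ⟨fun v hv => (hmeas.1 v hv).1, fun v hv hne => ((hmeas.1 v hv).2.2 hne).1,
      hmeas.2.1, hmeas.2.2⟩
  exact pm_decomp G d lt hSTO μ φ (Set.univ : Set V).ncard Set.univ le_rfl hsub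
    (fun v _ => hpri v) pm
end

section
/- Let G be a mean-payoff parity game whose vertex priorities are bounded by an even number d. If the whole vertex set V, viewed as a subgame, has a strategy decomposition for Dis, then there exists a progress measure for G (over some linearly ordered set M). -/
section Helpers

/-- strict order on components -/
def mlt : List ℕ → List ℕ → Prop := List.Lex (· < ·)

/-- least even number ≥ b -/
def drel (b : ℕ) : ℕ := 2 * ((b + 1) / 2)

lemma drel_of_even {b : ℕ} (h : Even b) : drel b = b := by
  obtain ⟨k, hk⟩ := h; subst hk; rw [drel]; omega

lemma drel_of_odd {b : ℕ} (h : Odd b) : drel b = b + 1 := by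
  obtain ⟨k, hk⟩ := h; subst hk; rw [drel]; omega

lemma le_drel (b : ℕ) : b ≤ drel b := by rw [drel]; omega

lemma drel_le_succ (b : ℕ) : drel b ≤ b + 1 := by rw [drel]; omega

lemma lex_append_left {M : Type} {lt : M → M → Prop} {s t : List M}
    (c : List M) (h : List.Lex lt s t) : List.Lex lt (c ++ s) (c ++ t) := by
  induction c with
  | nil => exact h
  | cons a c ih => exact List.Lex.cons ih

lemma lex_nil_lt {M : Type} {lt : M → M → Prop} {t : List M} (h : t ≠ []) :
    List.Lex lt [] t := by
  cases t with
  | nil => exact absurd rfl h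
  | cons a t => exact List.Lex.nil

/-- the per-subgame embedding: pad with `g` copies of `[0]`, then merge `a`
into the head component (this gives `[[a]]` if everything is empty). -/
def EmbL (a g : ℕ) (s : List (List ℕ)) : List (List ℕ) :=
  (a :: (List.replicate g ([0] : List ℕ) ++ s).headI)
    :: (List.replicate g ([0] : List ℕ) ++ s).tail

lemma EmbL_head (a g : ℕ) (s : List (List ℕ)) :
    ∃ c r, EmbL a g s = (a :: c) :: r := ⟨_, _, rfl⟩

lemma EmbL_ne_nil (a g : ℕ) (s : List (List ℕ)) : EmbL a g s ≠ [] := by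
  simp [EmbL]

lemma EmbL_length {a g : ℕ} {s : List (List ℕ)} (h : ¬(g = 0 ∧ s = [])) :
    (EmbL a g s).length = g + s.length := by
  have hne : List.replicate g ([0] : List ℕ) ++ s ≠ [] := by
    simp only [ne_eq, List.append_eq_nil_iff]
    intro ⟨h1, h2⟩
    exact h ⟨by simpa using congrArg List.length h1, h2⟩
  have := List.length_tail (l := List.replicate g ([0] : List ℕ) ++ s)
  have hlen : (List.replicate g ([0] : List ℕ) ++ s).length = g + s.length := by simp
  have hpos : 0 < (List.replicate g ([0] : List ℕ) ++ s).length :=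
    List.length_pos_iff.mpr hne
  simp only [EmbL, List.length_cons]
  omega

lemma EmbL_nilnil (a : ℕ) : EmbL a 0 [] = [[a]] := rfl

lemma EmbL_length_nilnil (a : ℕ) : (EmbL a 0 []).length = 1 := rfl

lemma EmbL_comps_ne_nil {g : ℕ} {s : List (List ℕ)} (a : ℕ) (h : ∀ c ∈ s, c ≠ [])
    {c : List ℕ} (hc : c ∈ EmbL a g s) : c ≠ [] := by
  unfold EmbL at hc
  rcases List.mem_cons.mp hc with h1 | h2
  · simp [h1]
  · have : c ∈ List.replicate g ([0] : List ℕ) ++ s := List.mem_of_mem_tail h2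
    rcases List.mem_append.mp this with h3 | h4
    · have := List.eq_of_mem_replicate h3; simp [this]
    · exact h _ h4

lemma F_mono (a : ℕ) {s' t' : List (List ℕ)} (ht'ne : ∀ c ∈ t', c ≠ [])
    (h : List.Lex mlt s' t') :
    List.Lex mlt ((a :: s'.headI) :: s'.tail) ((a :: t'.headI) :: t'.tail) := by
  cases h with
  | nil =>
    rename_i a' l
    have hane : a' ≠ [] := ht'ne a' (by simp)
    exact List.Lex.rel (List.Lex.cons (lex_nil_lt hane))
  | rel hr => exact List.Lex.rel (List.Lex.cons hr)
  | cons hc => exact List.Lex.cons hc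

lemma EmbL_mono {a g : ℕ} {s t : List (List ℕ)} (ht : ∀ c ∈ t, c ≠ [])
    (h : List.Lex mlt s t) : List.Lex mlt (EmbL a g s) (EmbL a g t) := by
  have h' : List.Lex mlt (List.replicate g ([0] : List ℕ) ++ s)
      (List.replicate g ([0] : List ℕ) ++ t) := lex_append_left _ h
  have ht'ne : ∀ c ∈ List.replicate g ([0] : List ℕ) ++ t, c ≠ [] := by
    intro c hc
    rcases List.mem_append.mp hc with h3 | h4
    · have := List.eq_of_mem_replicate h3; simp [this]
    · exact ht _ h4
  exact F_mono a ht'ne h'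

lemma headI_take {m : ℕ} (hm : 1 ≤ m) (l : List (List ℕ)) :
    (l.take m).headI = l.headI := by
  cases l with
  | nil => simp
  | cons c r => cases m with
    | zero => omega
    | succ m => simp

lemma tail_take' {m : ℕ} (hm : 1 ≤ m) (l : List (List ℕ)) :
    (l.take m).tail = l.tail.take (m - 1) := by
  cases l with
  | nil => simp
  | cons c r => cases m with
    | zero => omega
    | succ m => simp

lemma EmbL_trunc {a g dR dW p : ℕ} (s : List (List ℕ)) (hp : p ≤ dR)
    (hk : 1 ≤ g ∨ p < dR) (hd : dW = dR + 2 * g) :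
    trunc dW p (EmbL a g s) = EmbL a g (trunc dR p s) := by
  have hcount : (dW + 1 - p) / 2 = (dR + 1 - p) / 2 + g := by omega
  set k' := (dR + 1 - p) / 2 with hk'
  have hk1 : 1 ≤ k' + g := by
    rcases hk with h | h
    · omega
    · have : 2 ≤ dR + 1 - p := by omega
      have : 1 ≤ k' := by rw [hk']; omega
      omega
  have htake : List.take (k' + g) (List.replicate g ([0] : List ℕ) ++ s)
      = List.replicate g ([0] : List ℕ) ++ List.take k' s := by
    have := List.take_length_add_append (l₁ := List.replicate g ([0] : List ℕ)) (l₂ := s) k'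
    simpa [Nat.add_comm, List.length_replicate] using this
  show List.take ((dW + 1 - p)/2) (EmbL a g s) = EmbL a g (List.take ((dR + 1 - p)/2) s)
  rw [hcount, ← hk']
  unfold EmbL
  rw [← htake]
  set l := List.replicate g ([0] : List ℕ) ++ s with hl
  rw [headI_take hk1, tail_take' hk1]
  cases hkg : k' + g with
  | zero => omega
  | succ m =>
    simp only [List.take_succ_cons, Nat.succ_sub_one]

section MaxCost

variable {V : Type} [Fintype V]

lemma maxCost_bddAbove (G : MPPGame V) (W : Set V) :
    BddAbove {n : ℕ | ∃ v ∈ W, ∃ u ∈ W, G.edge v u ∧ n = (G.cost v u).natAbs} := by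
  refine ⟨Finset.univ.sup (fun q : V × V => (G.cost q.1 q.2).natAbs), ?_⟩
  rintro n ⟨v, -, u, -, -, rfl⟩
  exact Finset.le_sup (f := fun q : V × V => (G.cost q.1 q.2).natAbs)
    (Finset.mem_univ (v, u))

lemma natAbs_le_maxCostOn (G : MPPGame V) {W : Set V} {v u : V}
    (hv : v ∈ W) (hu : u ∈ W) (he : G.edge v u) :
    (G.cost v u).natAbs ≤ G.maxCostOn W :=
  le_csSup (maxCost_bddAbove G W) ⟨v, hv, u, hu, he, rfl⟩

lemma cost_abs_le (G : MPPGame V) {W : Set V} {v u : V}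
    (hv : v ∈ W) (hu : u ∈ W) (he : G.edge v u) :
    |G.cost v u| ≤ (G.maxCostOn W : ℤ) := by
  rw [Int.abs_eq_natAbs]
  exact_mod_cast natAbs_le_maxCostOn G hv hu he

lemma maxCostOn_mono (G : MPPGame V) {R W : Set V} (h : R ⊆ W) :
    G.maxCostOn R ≤ G.maxCostOn W := by
  rcases Set.eq_empty_or_nonempty
      {n : ℕ | ∃ v ∈ R, ∃ u ∈ R, G.edge v u ∧ n = (G.cost v u).natAbs} with he | hne
  · rw [MPPGame.maxCostOn, he, csSup_empty]; exact Nat.zero_le _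
  · exact csSup_le_csSup (maxCost_bddAbove G W) hne
      (by rintro n ⟨v, hv, u, hu, hE, rfl⟩; exact ⟨v, h hv, u, h hu, hE, rfl⟩)

lemma bound_mono (G : MPPGame V) {R W : Set V} (h : R ⊆ W) :
    ((R.ncard * G.maxCostOn R : ℕ) : ℤ) ≤ ((W.ncard * G.maxCostOn W : ℕ) : ℤ) := by
  have h1 : R.ncard ≤ W.ncard := Set.ncard_le_ncard h (Set.toFinite W)
  have h2 := maxCostOn_mono G h
  exact_mod_cast Nat.mul_le_mul h1 h2

end MaxCost

section Attractor

open Classical in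
/-- The attractor construction for player Dis, with its rank function. -/
lemma attractor (V : Type) [Fintype V] (G : MPPGame V) (W Z : Set V) (τ : V → V)
    (hτ : ∀ v ∈ W, G.disOwns v → G.edge v (τ v) ∧ τ v ∈ W)
    (hsub : ∀ v ∈ W, ∃ u ∈ W, G.edge v u) :
    ∃ (A : Set V) (rank : V → ℕ),
      (A ⊆ W) ∧ (∀ v ∈ A, v ∉ Z) ∧ (∀ v ∈ A, 1 ≤ rank v) ∧
      (∀ v ∈ A, G.disOwns v → τ v ∈ Z ∨ (τ v ∈ A ∧ rank (τ v) < rank v)) ∧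
      (∀ v ∈ A, ¬G.disOwns v → ∀ u ∈ W, G.edge v u →
          u ∈ Z ∨ (u ∈ A ∧ rank u < rank v)) ∧
      (∀ T : Set V,
        (∀ p, G.PlayIn W p → p 0 ∈ T → G.ConsistentDisPos τ p → ∃ i, p i ∈ Z) →
        ∀ v ∈ T, v ∈ W → v ∉ Z → v ∈ A) := by
  classical
  -- iterated attractor
  let step : Set V → Set V := fun A =>
    A ∪ {v | v ∈ W ∧ v ∉ Z ∧
      ((G.disOwns v ∧ (τ v ∈ Z ∨ τ v ∈ A)) ∨
        (¬G.disOwns v ∧ ∀ u ∈ W, G.edge v u → u ∈ Z ∨ u ∈ A))}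
  let Att : ℕ → Set V := fun i => Nat.rec ∅ (fun _ A => step A) i
  have hAtt0 : Att 0 = ∅ := rfl
  have hAttS : ∀ i, Att (i+1) = step (Att i) := fun i => rfl
  have hmono : ∀ i j, i ≤ j → Att i ⊆ Att j := by
    intro i j hij
    induction j with
    | zero => have : i = 0 := by omega
              subst this; exact subset_rfl
    | succ j ih =>
      rcases Nat.lt_or_ge i (j+1) with h | h
      · refine subset_trans (ih (by omega)) ?_
        rw [hAttS]; exact Set.subset_union_left
      · have : i = j + 1 := by omega
        subst this; exact subset_rfl
  set A : Set V := {v | ∃ i, v ∈ Att i} with hA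
  have hranke : ∀ v ∈ A, ∃ i, v ∈ Att i := fun v hv => hv
  set rank : V → ℕ := fun v => sInf {i | v ∈ Att i} with hrank
  have hrank_mem : ∀ v ∈ A, v ∈ Att (rank v) := by
    intro v hv
    obtain ⟨i, hi⟩ := hv
    exact Nat.sInf_mem (⟨i, hi⟩ : {i | v ∈ Att i}.Nonempty)
  have hrank_le : ∀ v i, v ∈ Att i → rank v ≤ i := by
    intro v i hi
    exact Nat.sInf_le hi
  -- basic membership facts
  have hmem : ∀ v ∈ A, v ∈ W ∧ v ∉ Z ∧ 1 ≤ rank v ∧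
      ((G.disOwns v ∧ (τ v ∈ Z ∨ (τ v ∈ A ∧ rank (τ v) < rank v))) ∨
        (¬G.disOwns v ∧ ∀ u ∈ W, G.edge v u → u ∈ Z ∨ (u ∈ A ∧ rank u < rank v))) := by
    intro v hv
    have hm := hrank_mem v hv
    cases hn : rank v with
    | zero => rw [hn] at hm; exact absurd hm (by rw [hAtt0]; simp)
    | succ m =>
      rw [hn] at hm
      rw [hAttS] at hm
      have hnotm : v ∉ Att m := by
        intro hc
        have := hrank_le v m hc
        omega
      rcases hm with hm | hm
      · exact absurd hm hnotm
      · obtain ⟨hW, hZ, hcond⟩ := hm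
        refine ⟨hW, hZ, by omega, ?_⟩
        rcases hcond with ⟨hd, hc⟩ | ⟨hd, hc⟩
        · refine Or.inl ⟨hd, ?_⟩
          rcases hc with h | h
          · exact Or.inl h
          · exact Or.inr ⟨⟨m, h⟩, by have := hrank_le _ _ h; omega⟩
        · refine Or.inr ⟨hd, ?_⟩
          intro u hu he
          rcases hc u hu he with h | h
          · exact Or.inl h
          · exact Or.inr ⟨⟨m, h⟩, by have := hrank_le _ _ h; omega⟩
  refine ⟨A, rank, ?_, ?_, ?_, ?_, ?_, ?_⟩
  · exact fun v hv => (hmem v hv).1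
  · exact fun v hv => (hmem v hv).2.1
  · exact fun v hv => (hmem v hv).2.2.1
  · intro v hv hd
    rcases (hmem v hv).2.2.2 with ⟨_, h⟩ | ⟨hnd, _⟩
    · exact h
    · exact absurd hd hnd
  · intro v hv hd
    rcases (hmem v hv).2.2.2 with ⟨hd', _⟩ | ⟨_, h⟩
    · exact absurd hd' hd
    · exact h
  -- the reachability part
  intro T hT v₀ hv₀T hv₀W hv₀Z
  by_contra hv₀A
  have hstep : ∀ i x, x ∈ W → x ∉ Z →
      ((G.disOwns x ∧ (τ x ∈ Z ∨ τ x ∈ Att i)) ∨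
        (¬G.disOwns x ∧ ∀ u ∈ W, G.edge x u → u ∈ Z ∨ u ∈ Att i)) → x ∈ A := by
    intro i x hW hZ hc
    exact ⟨i+1, by rw [hAttS]; right; exact ⟨hW, hZ, hc⟩⟩
  -- escape property
  have hesc : ∀ x, x ∈ W → x ∉ Z → x ∉ A →
      (G.disOwns x → τ x ∈ W ∧ τ x ∉ Z ∧ τ x ∉ A) ∧
      (¬G.disOwns x → ∃ u, u ∈ W ∧ G.edge x u ∧ u ∉ Z ∧ u ∉ A) := by
    intro x hW hZ hA'
    constructor
    · intro hd
      obtain ⟨he, hτW⟩ := hτ x hW hd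
      refine ⟨hτW, ?_, ?_⟩
      · intro h
        exact hA' (hstep 0 x hW hZ (Or.inl ⟨hd, Or.inl h⟩))
      · intro h
        obtain ⟨i, hi⟩ := h
        exact hA' (hstep i x hW hZ (Or.inl ⟨hd, Or.inr hi⟩))
    · intro hd
      by_contra hc
      have hall : ∀ u, u ∈ W → G.edge x u → u ∈ Z ∨ u ∈ A := by
        intro u hu he
        rcases Classical.em (u ∈ Z) with h1 | h1
        · exact Or.inl h1
        · rcases Classical.em (u ∈ A) with h2 | h2
          · exact Or.inr h2
          · exact absurd (show ∃ u, u ∈ W ∧ G.edge x u ∧ u ∉ Z ∧ u ∉ A from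
              ⟨u, hu, he, h1, h2⟩) hc
      -- uniform bound
      set S : Finset V := (Set.toFinite {u | u ∈ W ∧ G.edge x u}).toFinset with hS
      set I : ℕ := S.sup rank with hI
      have hallI : ∀ u ∈ W, G.edge x u → u ∈ Z ∨ u ∈ Att I := by
        intro u hu he
        rcases hall u hu he with h | h
        · exact Or.inl h
        · right
          have h1 : u ∈ S := by rw [hS]; rw [Set.Finite.mem_toFinset]; exact ⟨hu, he⟩
          have h2 : rank u ≤ I := Finset.le_sup (f := rank) h1
          exact hmono _ _ h2 (hrank_mem u h)
      exact hA' (hstep I x hW hZ (Or.inr ⟨hd, hallI⟩))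
  -- build an escaping play
  haveI hdec : ∀ p : Prop, Decidable p := fun p => Classical.propDecidable p
  let F : V → V := fun x =>
    if hx : x ∈ W ∧ x ∉ Z ∧ x ∉ A then
      if hd : G.disOwns x then τ x
      else Classical.choose ((hesc x hx.1 hx.2.1 hx.2.2).2 hd)
    else x
  let p : ℕ → V := fun n => F^[n] v₀
  have hp0 : p 0 = v₀ := rfl
  have hpS : ∀ n, p (n+1) = F (p n) := fun n => Function.iterate_succ_apply' F n v₀
  have hinv : ∀ n, p n ∈ W ∧ p n ∉ Z ∧ p n ∉ A := by
    intro n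
    induction n with
    | zero => exact ⟨hv₀W, hv₀Z, hv₀A⟩
    | succ n ih =>
      obtain ⟨h1, h2, h3⟩ := ih
      rw [hpS]
      by_cases hd : G.disOwns (p n)
      · have := (hesc _ h1 h2 h3).1 hd
        simp only [F, dif_pos (⟨h1, h2, h3⟩ : p n ∈ W ∧ p n ∉ Z ∧ p n ∉ A), dif_pos hd]
        exact this
      · have hex := (hesc _ h1 h2 h3).2 hd
        simp only [F, dif_pos (⟨h1, h2, h3⟩ : p n ∈ W ∧ p n ∉ Z ∧ p n ∉ A), dif_neg hd]
        obtain ⟨hu1, _, hu3, hu4⟩ := Classical.choose_spec hex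
        exact ⟨hu1, hu3, hu4⟩
  have hplay : G.PlayIn W p := by
    refine ⟨fun i => (hinv i).1, fun i => ?_⟩
    obtain ⟨h1, h2, h3⟩ := hinv i
    rw [hpS]
    by_cases hd : G.disOwns (p i)
    · simp only [F, dif_pos (⟨h1, h2, h3⟩ : p i ∈ W ∧ p i ∉ Z ∧ p i ∉ A), dif_pos hd]
      exact (hτ _ h1 hd).1
    · have hex := (hesc _ h1 h2 h3).2 hd
      simp only [F, dif_pos (⟨h1, h2, h3⟩ : p i ∈ W ∧ p i ∉ Z ∧ p i ∉ A), dif_neg hd]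
      exact (Classical.choose_spec hex).2.1
  have hcons : G.ConsistentDisPos τ p := by
    intro i hd
    obtain ⟨h1, h2, h3⟩ := hinv i
    rw [hpS]
    simp only [F, dif_pos (⟨h1, h2, h3⟩ : p i ∈ W ∧ p i ∉ Z ∧ p i ∉ A), dif_pos hd]
  obtain ⟨i, hi⟩ := hT p hplay (by rw [hp0]; exact hv₀T) hcons
  exact (hinv i).2.1 hi

end Attractor

section Energy

variable {V : Type} [Fintype V]

open Finset in
lemma periodic_mean_neg (G : MPPGame V) (f : ℕ → V) (k : ℕ) (hk : 1 ≤ k)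
    (hper : ∀ t, f (t + k) = f t)
    (hc : (∑ t ∈ Finset.range k, G.cost (f t) (f (t + 1))) < 0) :
    G.meanPayoff f < 0 := by
  classical
  set h : ℕ → ℝ := fun t => (G.cost (f t) (f (t + 1)) : ℝ) with hh
  have hper' : ∀ t, h (t + k) = h t := by
    intro t
    have h1 : f (t + k) = f t := hper t
    have h2 : f (t + k + 1) = f (t + 1) := by
      have := hper (t + 1); rwa [show t + 1 + k = t + k + 1 by omega] at this
    simp [hh, h1, h2]
  set c : ℝ := ∑ t ∈ Finset.range k, h t with hcdef
  have hcint : c = ((∑ t ∈ Finset.range k, G.cost (f t) (f (t + 1)) : ℤ) : ℝ) := by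
    rw [hcdef]; push_cast; rfl
  have hc1 : c ≤ -1 := by
    rw [hcint]
    have : (∑ t ∈ Finset.range k, G.cost (f t) (f (t + 1)) : ℤ) ≤ -1 := by omega
    exact_mod_cast this
  have hkR : (1 : ℝ) ≤ (k : ℝ) := by exact_mod_cast hk
  have hkpos : (0 : ℝ) < (k : ℝ) := by linarith
  -- window sums
  have hwin : ∀ N, ∑ s ∈ Finset.range k, h (N + s) = c := by
    intro N
    induction N with
    | zero => simp [hcdef]
    | succ N ih =>
      have e1 : ∑ s ∈ Finset.range (k+1), h (N + s)
          = ∑ s ∈ Finset.range k, h (N + (s+1)) + h (N + 0) :=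
        Finset.sum_range_succ' (fun s => h (N + s)) k
      have e2 : ∑ s ∈ Finset.range (k+1), h (N + s)
          = ∑ s ∈ Finset.range k, h (N + s) + h (N + k) :=
        Finset.sum_range_succ (fun s => h (N + s)) k
      have e3 : ∑ s ∈ Finset.range k, h (N + (s+1)) = ∑ s ∈ Finset.range k, h (N + 1 + s) := by
        apply Finset.sum_congr rfl; intro s _; congr 1; omega
      have e4 : h (N + k) = h N := hper' N
      have : ∑ s ∈ Finset.range k, h (N + 1 + s) + h N = ∑ s ∈ Finset.range k, h (N + s) + h N := by
        rw [← e3]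
        have := e1.symm.trans e2
        simpa [e4] using this
      have := add_right_cancel this
      rw [this, ih]
  set S : ℕ → ℝ := fun N => ∑ t ∈ Finset.range N, h t with hS
  have hSk : ∀ N, S (N + k) = S N + c := by
    intro N
    have e1 : ∑ t ∈ Finset.Ico 0 N, h t + ∑ t ∈ Finset.Ico N (N + k), h t
        = ∑ t ∈ Finset.Ico 0 (N + k), h t :=
      Finset.sum_Ico_consecutive h (Nat.zero_le N) (by omega)
    have e2 : ∑ t ∈ Finset.Ico N (N + k), h t = ∑ s ∈ Finset.range (N + k - N), h (N + s) :=
      Finset.sum_Ico_eq_sum_range h N (N + k)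
    show (∑ t ∈ Finset.range (N + k), h t) = (∑ t ∈ Finset.range N, h t) + c
    simp only [← Finset.range_eq_Ico] at e1
    rw [← e1, e2, show N + k - N = k by omega, hwin N]
  have hSq : ∀ q r, S (q * k + r) = q * c + S r := by
    intro q
    induction q with
    | zero => intro r; simp
    | succ q ih =>
      intro r
      have : (q + 1) * k + r = (q * k + r) + k := by ring
      rw [this, hSk, ih]
      push_cast; ring
  set D : ℝ := ∑ t ∈ Finset.range k, |h t| with hD
  have hD0 : 0 ≤ D := Finset.sum_nonneg fun t _ => abs_nonneg _
  have hSr : ∀ r, r ≤ k → |S r| ≤ D := by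
    intro r hr
    calc |S r| ≤ ∑ t ∈ Finset.range r, |h t| := Finset.abs_sum_le_sum_abs _ _
      _ ≤ D := Finset.sum_le_sum_of_subset_of_nonneg
          (Finset.range_subset_range.mpr hr) (fun t _ _ => abs_nonneg _)
  -- lower bound for coboundedness
  have hmod : ∀ t, h t = h (t % k) := by
    intro t
    have : ∀ q m, h (m + q * k) = h m := by
      intro q
      induction q with
      | zero => intro m; simp
      | succ q ih =>
        intro m
        have : m + (q + 1) * k = (m + q * k) + k := by ring
        rw [this, hper', ih]
    conv_lhs => rw [show t = t % k + (t / k) * k by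
      rw [Nat.mul_comm]; exact (Nat.mod_add_div t k).symm]
    exact this _ _
  have habs : ∀ t, |h t| ≤ D := by
    intro t
    rw [hmod t]
    exact Finset.single_le_sum (f := fun t => |h t|) (fun t _ => abs_nonneg _)
      (Finset.mem_range.mpr (Nat.mod_lt t (by omega)))
  have hlow : ∀ N, -D ≤ S N / N := by
    intro N
    rcases Nat.eq_zero_or_pos N with h0 | h0
    · subst h0; simp [hS]; exact hD0
    · have hNpos : (0 : ℝ) < N := by exact_mod_cast h0
      rw [le_div_iff₀ hNpos]
      have : |S N| ≤ N * D := by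
        calc |S N| ≤ ∑ t ∈ Finset.range N, |h t| := Finset.abs_sum_le_sum_abs _ _
          _ ≤ ∑ _t ∈ Finset.range N, D := Finset.sum_le_sum fun t _ => habs t
          _ = N * D := by rw [Finset.sum_const, Finset.card_range]; ring
      have := neg_abs_le (S N)
      nlinarith
  -- eventual upper bound
  set ε : ℝ := c / (2 * k) with hε
  have hεneg : ε < 0 := div_neg_of_neg_of_pos (by linarith) (by linarith)
  have hub : ∀ᶠ N in Filter.atTop, S N / N ≤ ε := by
    rw [Filter.eventually_atTop]
    set C0 : ℝ := 2 * (k : ℝ) * (D - c) with hC0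
    refine ⟨⌈C0⌉₊ + 1, fun N hN => ?_⟩
    have hN1 : 1 ≤ N := by omega
    have hNpos : (0 : ℝ) < N := by exact_mod_cast hN1
    have hNR : C0 ≤ (N : ℝ) := by
      have h1 : (⌈C0⌉₊ : ℝ) ≤ N := by exact_mod_cast (by omega : ⌈C0⌉₊ ≤ N)
      exact le_trans (Nat.le_ceil _) h1
    set q := N / k with hq
    set r := N % k with hr
    have hNqr : q * k + r = N := by
      rw [hq, hr, Nat.mul_comm]; exact Nat.div_add_mod N k
    have hrk : r < k := Nat.mod_lt N (by omega)
    have hSN : S N = q * c + S r := by rw [← hNqr]; exact hSq q r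
    have hSrD : S r ≤ D := le_trans (le_abs_self _) (hSr r (by omega))
    have e2 : (q : ℝ) * (k : ℝ) = (N : ℝ) - (r : ℝ) := by
      have : ((q * k + r : ℕ) : ℝ) = (N : ℝ) := by exact_mod_cast hNqr
      push_cast at this; linarith
    have e3 : (r : ℝ) * (-c) ≤ (k : ℝ) * (-c) := by
      have : (r : ℝ) ≤ (k : ℝ) := by exact_mod_cast le_of_lt hrk
      nlinarith
    have key : C0 ≤ (N : ℝ) * (-c) := by
      have : (N : ℝ) * 1 ≤ (N : ℝ) * (-c) := by nlinarith
      linarith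
    rw [hε, div_le_div_iff₀ hNpos (by linarith : (0:ℝ) < 2 * k)]
    calc S N * (2 * k) ≤ (q * c + D) * (2 * k) := by nlinarith [hSN, hSrD]
      _ = 2 * c * ((q:ℝ) * k) + 2 * k * D := by ring
      _ = 2 * c * ((N:ℝ) - r) + 2 * k * D := by rw [e2]
      _ = 2 * (N:ℝ) * c + 2 * ((r:ℝ) * (-c)) + 2 * k * D := by ring
      _ ≤ 2 * (N:ℝ) * c + 2 * ((k:ℝ) * (-c)) + 2 * k * D := by linarith
      _ = 2 * (N:ℝ) * c + C0 := by rw [hC0]; ring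
      _ ≤ 2 * (N:ℝ) * c + (N:ℝ) * (-c) := by linarith
      _ = c * N := by ring
  -- conclude
  have hcob : Filter.IsCoboundedUnder (· ≤ ·) Filter.atTop (fun N => S N / N) :=
    Filter.IsBoundedUnder.isCoboundedUnder_le
      ⟨-D, Filter.eventually_map.mpr (Filter.Eventually.of_forall hlow)⟩
  have hlim : Filter.limsup (fun N => S N / N) Filter.atTop ≤ ε :=
    Filter.limsup_le_of_le hcob hub
  have : G.meanPayoff f = Filter.limsup (fun N => S N / N) Filter.atTop := rfl
  rw [this]
  exact lt_of_le_of_lt hlim hεneg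

end Energy

section Energy2

variable {V : Type} [Fintype V]

/-- The restricted step relation for a mean-payoff winning strategy. -/
def Estep (G : MPPGame V) (R : Set V) (σ : V → V) (v u : V) : Prop :=
  v ∈ R ∧ u ∈ R ∧ G.edge v u ∧ (G.disOwns v → u = σ v)

/-- cost of a finite path -/
def pcost (G : MPPGame V) (f : ℕ → V) (L : ℕ) : ℤ :=
  ∑ t ∈ Finset.range L, G.cost (f t) (f (t + 1))

lemma cycle_nonneg (G : MPPGame V) {R : Set V} {σ : V → V} (hMP : G.DisMPWin R σ)
    (f : ℕ → V) (i j : ℕ) (hij : i < j) (hfij : f i = f j)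
    (hstep : ∀ t, i ≤ t → t < j → Estep G R σ (f t) (f (t + 1))) :
    0 ≤ ∑ t ∈ Finset.Ico i j, G.cost (f t) (f (t + 1)) := by
  by_contra hneg
  push_neg at hneg
  set n := j - i with hn
  have hn1 : 1 ≤ n := by omega
  have hmod1 : ∀ t : ℕ, (t + 1) % n = (t % n + 1) % n := by
    intro t
    conv_lhs => rw [show t + 1 = n * (t / n) + (t % n + 1) by
      have := Nat.div_add_mod t n; omega]
    rw [Nat.mul_add_mod]
  set g : ℕ → V := fun t => f (i + t % n) with hg
  have hgt : ∀ t, g t = f (i + t % n) := fun t => rfl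
  have hgsucc : ∀ t, g (t + 1) = f (i + t % n + 1) := by
    intro t
    have hm : t % n < n := Nat.mod_lt t (by omega)
    rw [hgt, hmod1]
    rcases Nat.lt_or_ge (t % n + 1) n with h | h
    · have e : i + (t % n + 1) = i + t % n + 1 := by omega
      rw [Nat.mod_eq_of_lt h, e]
    · have : t % n + 1 = n := by omega
      rw [this, Nat.mod_self, Nat.add_zero, hfij]
      congr 1
      omega
  have hgstep : ∀ t, Estep G R σ (g t) (g (t + 1)) := by
    intro t
    have hm : t % n < n := Nat.mod_lt t (by omega)
    rw [hgt, hgsucc]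
    exact hstep (i + t % n) (by omega) (by omega)
  have hper : ∀ t, g (t + n) = g t := by
    intro t; rw [hgt, hgt, Nat.add_mod_right]
  have hsum : ∑ t ∈ Finset.range n, G.cost (g t) (g (t + 1))
      = ∑ t ∈ Finset.Ico i j, G.cost (f t) (f (t + 1)) := by
    rw [Finset.sum_Ico_eq_sum_range]
    rw [show j - i = n from rfl]
    apply Finset.sum_congr rfl
    intro t ht
    have ht' : t < n := Finset.mem_range.mp ht
    rw [hgt, hgsucc, Nat.mod_eq_of_lt ht']
  have hneg' : ∑ t ∈ Finset.range n, G.cost (g t) (g (t + 1)) < 0 := by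
    rw [hsum]; exact hneg
  have hmean : G.meanPayoff g < 0 := periodic_mean_neg G g n hn1 hper hneg'
  have hplay : G.PlayIn R g :=
    ⟨fun t => (hgstep t).1, fun t => (hgstep t).2.2.1⟩
  have hcons : G.ConsistentDisPos σ g := fun t hd => (hgstep t).2.2.2 hd
  exact absurd (hMP.2 g hplay hcons) (by linarith)

lemma step_cost_bound (G : MPPGame V) {R : Set V} {σ : V → V} {v u : V}
    (h : Estep G R σ v u) : -(G.maxCostOn R : ℤ) ≤ G.cost v u := by
  have := cost_abs_le G h.1 h.2.1 h.2.2.1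
  have := abs_le.mp this
  linarith [this.1]

lemma val_bound (G : MPPGame V) {R : Set V} {σ : V → V} (hMP : G.DisMPWin R σ)
    {v : V} (hv : v ∈ R) :
    ∀ L (f : ℕ → V), f 0 = v → (∀ t < L, Estep G R σ (f t) (f (t + 1))) →
      -pcost G f L ≤ ((R.ncard * G.maxCostOn R : ℕ) : ℤ) := by
  intro L
  induction L using Nat.strong_induction_on with
  | _ L ih =>
    intro f hf0 hsteps
    set n := R.ncard with hn
    set C := G.maxCostOn R with hC
    have hinR : ∀ t, t ≤ L → f t ∈ R := by
      intro t
      induction t with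
      | zero => intro _; rw [hf0]; exact hv
      | succ t iht =>
        intro ht
        exact (hsteps t (by omega)).2.1
    rcases le_or_gt L n with hLn | hLn
    · -- short path
      have : -pcost G f L = ∑ t ∈ Finset.range L, -(G.cost (f t) (f (t + 1))) := by
        rw [pcost, ← Finset.sum_neg_distrib]
      rw [this]
      have h1 : ∑ t ∈ Finset.range L, -(G.cost (f t) (f (t + 1)))
          ≤ ∑ _t ∈ Finset.range L, (C : ℤ) := by
        apply Finset.sum_le_sum
        intro t ht
        have := step_cost_bound G (hsteps t (Finset.mem_range.mp ht))
        linarith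
      have h2 : ∑ _t ∈ Finset.range L, (C : ℤ) = (L : ℤ) * C := by
        rw [Finset.sum_const, Finset.card_range]; ring
      have h3 : (L : ℤ) * C ≤ (n : ℤ) * C := by
        have : (L : ℤ) ≤ (n : ℤ) := by exact_mod_cast hLn
        have : (0 : ℤ) ≤ (C : ℤ) := by positivity
        nlinarith [this]
      calc ∑ t ∈ Finset.range L, -(G.cost (f t) (f (t + 1))) ≤ (L : ℤ) * C := by
            rw [← h2]; exact h1
        _ ≤ (n : ℤ) * C := h3
        _ = ((n * C : ℕ) : ℤ) := by push_cast; ring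
    · -- repeat a vertex among f 0, …, f n and splice out the cycle
      have hRfin : (Set.toFinite R).toFinset.card = n := by
        rw [hn, Set.ncard_eq_toFinset_card]
      have hmaps : ∀ t ∈ Finset.range (n + 1), f t ∈ (Set.toFinite R).toFinset := by
        intro t ht
        rw [Set.Finite.mem_toFinset]
        exact hinR t (by have := Finset.mem_range.mp ht; omega)
      obtain ⟨x, hx, y, hy, hxy, hfxy⟩ :=
        Finset.exists_ne_map_eq_of_card_lt_of_maps_to
          (by rw [hRfin]; simp : (Set.toFinite R).toFinset.card < (Finset.range (n + 1)).card) hmaps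
      have hx' : x ≤ n := by have := Finset.mem_range.mp hx; omega
      have hy' : y ≤ n := by have := Finset.mem_range.mp hy; omega
      -- order them
      obtain ⟨i, j, hij, hfij⟩ : ∃ i j, i < j ∧ f i = f j ∧ j ≤ n := by
        rcases Nat.lt_or_ge x y with h | h
        · exact ⟨x, y, h, hfxy, hy'⟩
        · exact ⟨y, x, by omega, hfxy.symm, hx'⟩
      obtain ⟨hfij, hjn⟩ := hfij
      set δ := j - i with hδ
      have hδ1 : 1 ≤ δ := by omega
      set L' := L - δ with hL'
      have hjL : j < L := by omega
      have hiL' : i ≤ L' := by omega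
      set f' : ℕ → V := fun t => if t < i then f t else f (t + δ) with hf'
      have hf'eq : ∀ s, s ≤ i → f' s = f s := by
        intro s hs
        show (if s < i then f s else f (s + δ)) = f s
        rcases Nat.lt_or_ge s i with h | h
        · rw [if_pos h]
        · rw [if_neg (by omega : ¬ s < i)]
          have h2 : s + δ = j := by omega
          have h3 : s = i := by omega
          rw [h2, ← hfij, h3]
      have hf'ge : ∀ s, i ≤ s → f' s = f (s + δ) := by
        intro s hs
        show (if s < i then f s else f (s + δ)) = f (s + δ)
        rw [if_neg (by omega : ¬ s < i)]
      have hf'0 : f' 0 = v := by rw [hf'eq 0 (by omega), hf0]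
      have hsteps' : ∀ t < L', Estep G R σ (f' t) (f' (t + 1)) := by
        intro t ht
        rcases Nat.lt_or_ge t i with h | h
        · rw [hf'eq t (by omega), hf'eq (t+1) (by omega)]
          exact hsteps t (by omega)
        · rw [hf'ge t h, hf'ge (t+1) (by omega), show t + 1 + δ = (t + δ) + 1 by omega]
          exact hsteps (t + δ) (by omega)
      have hcost' : pcost G f' L' + ∑ t ∈ Finset.Ico i j, G.cost (f t) (f (t + 1))
          = pcost G f L := by
        have hsplit : pcost G f' L' = ∑ t ∈ Finset.range i, G.cost (f' t) (f' (t+1))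
            + ∑ t ∈ Finset.Ico i L', G.cost (f' t) (f' (t+1)) := by
          rw [pcost, Finset.range_eq_Ico,
            ← Finset.sum_Ico_consecutive _ (Nat.zero_le i) hiL', ← Finset.range_eq_Ico]
        have hfsplit : pcost G f L = ∑ t ∈ Finset.range i, G.cost (f t) (f (t+1))
            + ∑ t ∈ Finset.Ico i j, G.cost (f t) (f (t+1))
            + ∑ t ∈ Finset.Ico j L, G.cost (f t) (f (t+1)) := by
          rw [pcost, Finset.range_eq_Ico,
            ← Finset.sum_Ico_consecutive _ (Nat.zero_le j) (by omega : j ≤ L),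
            ← Finset.sum_Ico_consecutive _ (Nat.zero_le i) (by omega : i ≤ j),
            ← Finset.range_eq_Ico]
        have e1 : ∑ t ∈ Finset.range i, G.cost (f' t) (f' (t+1))
            = ∑ t ∈ Finset.range i, G.cost (f t) (f (t+1)) := by
          apply Finset.sum_congr rfl
          intro t ht
          have ht' : t < i := Finset.mem_range.mp ht
          rw [hf'eq t (by omega), hf'eq (t+1) (by omega)]
        have e2 : ∑ t ∈ Finset.Ico i L', G.cost (f' t) (f' (t+1))
            = ∑ t ∈ Finset.Ico j L, G.cost (f t) (f (t+1)) := by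
          rw [Finset.sum_Ico_eq_sum_range, Finset.sum_Ico_eq_sum_range]
          rw [show L' - i = L - j by omega]
          apply Finset.sum_congr rfl
          intro t _
          rw [hf'ge (i + t) (by omega), hf'ge (i + t + 1) (by omega)]
          congr 2 <;> omega
        rw [hsplit, hfsplit, e1, e2]; ring
      have hcyc : 0 ≤ ∑ t ∈ Finset.Ico i j, G.cost (f t) (f (t + 1)) :=
        cycle_nonneg G hMP f i j hij hfij (fun t h1 h2 => hsteps t (by omega))
      have hrec := ih L' (by omega) f' hf'0 hsteps'
      have : -pcost G f L ≤ -pcost G f' L' := by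
        rw [← hcost']; linarith
      exact le_trans this hrec

lemma energy_potential (G : MPPGame V) {R : Set V} {σ : V → V}
    (hMP : G.DisMPWin R σ) :
    ∃ φ : V → ℤ, ∀ v ∈ R,
      (0 ≤ φ v ∧ φ v ≤ ((R.ncard * G.maxCostOn R : ℕ) : ℤ)) ∧
      (G.disOwns v → φ (σ v) ≤ φ v + G.cost v (σ v)) ∧
      (¬G.disOwns v → ∀ u ∈ R, G.edge v u → φ u ≤ φ v + G.cost v u) := by
  classical
  set P : V → ℤ → Prop := fun v x =>
    ∃ L : ℕ, ∃ f : ℕ → V, f 0 = v ∧ (∀ t < L, Estep G R σ (f t) (f (t + 1)))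
      ∧ x = -pcost G f L with hP
  have hPzero : ∀ v, P v 0 := by
    intro v
    exact ⟨0, fun _ => v, rfl, fun t ht => absurd ht (by omega), by simp [pcost]⟩
  have hgreat : ∀ v, v ∈ R → ∃ x, P v x ∧ ∀ y, P v y → y ≤ x := by
    intro v hv
    obtain ⟨ub, hub1, hub2⟩ := Int.exists_greatest_of_bdd
      (P := P v)
      ⟨((R.ncard * G.maxCostOn R : ℕ) : ℤ), by
        rintro z ⟨L, f, hf0, hst, rfl⟩
        exact val_bound G hMP hv L f hf0 hst⟩
      ⟨0, hPzero v⟩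
    exact ⟨ub, hub1, hub2⟩
  set φ : V → ℤ := fun v => if h : v ∈ R then (hgreat v h).choose else 0 with hφ
  have hφP : ∀ v (h : v ∈ R), P v (φ v) ∧ ∀ y, P v y → y ≤ φ v := by
    intro v h
    have : φ v = (hgreat v h).choose := by rw [hφ]; simp [h]
    rw [this]
    exact (hgreat v h).choose_spec
  have hedge : ∀ v u, Estep G R σ v u → φ u ≤ φ v + G.cost v u := by
    intro v u hE
    have hvR := hE.1
    have huR := hE.2.1
    obtain ⟨⟨L, f, hf0, hst, hval⟩, _⟩ := hφP u huR
    set g : ℕ → V := fun t => if t = 0 then v else f (t - 1) with hgdef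
    have hg0 : g 0 = v := rfl
    have hgs : ∀ t, g (t + 1) = f t := by intro t; simp [hgdef]
    have hgsteps : ∀ t < L + 1, Estep G R σ (g t) (g (t + 1)) := by
      intro t ht
      cases t with
      | zero => rw [hg0, hgs, hf0]; exact hE
      | succ s => rw [hgs, hgs]; exact hst s (by omega)
    have hcost : pcost G g (L + 1) = G.cost v u + pcost G f L := by
      rw [pcost, Finset.sum_range_succ' (fun t => G.cost (g t) (g (t + 1))) L]
      have e1 : ∀ t, G.cost (g (t + 1)) (g (t + 1 + 1)) = G.cost (f t) (f (t + 1)) := by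
        intro t; rw [hgs, hgs]
      have e2 : G.cost (g 0) (g 1) = G.cost v u := by
        rw [hg0, hgs, hf0]
      calc ∑ t ∈ Finset.range L, G.cost (g (t + 1)) (g (t + 1 + 1)) + G.cost (g 0) (g (0 + 1))
          = ∑ t ∈ Finset.range L, G.cost (f t) (f (t + 1)) + G.cost v u := by
            rw [Finset.sum_congr rfl (fun t _ => e1 t)]; rw [show (0:ℕ) + 1 = 1 from rfl, e2]
        _ = G.cost v u + pcost G f L := by rw [pcost]; ring
    have hPP : P v (φ u - G.cost v u) := by
      refine ⟨L + 1, g, hg0, hgsteps, ?_⟩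
      rw [hcost, hval]; ring
    have := (hφP v hvR).2 _ hPP
    linarith
  refine ⟨φ, fun v hv => ⟨⟨?_, ?_⟩, ?_, ?_⟩⟩
  · exact (hφP v hv).2 0 (hPzero v)
  · obtain ⟨⟨L, f, hf0, hst, hval⟩, -⟩ := hφP v hv
    rw [hval]; exact val_bound G hMP hv L f hf0 hst
  · intro hd
    have hE : Estep G R σ v (σ v) := by
      obtain ⟨he, hin⟩ := hMP.1 v hv hd
      exact ⟨hv, hin, he, fun _ => rfl⟩
    exact hedge v (σ v) hE
  · intro hd u huR he
    exact hedge v u ⟨hv, huR, he, fun h => absurd h hd⟩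

end Energy2

section Transfer

variable {V : Type}

/-- The package produced for each subgame in the main induction. -/
def Pkg (G : MPPGame V) (b : ℕ) (W : Set V) (μ : V → List (List ℕ))
    (φ : V → WithTop ℤ) : Prop :=
  (∀ v ∈ W, ∀ c ∈ μ v, c ≠ []) ∧
  ∀ v ∈ W,
    G.pri v ≤ b ∧
    (∃ l, Odd l ∧ G.pri v ≤ l ∧ drel b + 1 = 2 * (μ v).length + l) ∧
    (φ v = ⊤ → drel b + 1 ≤ 2 * (μ v).length + G.pri v + 1) ∧
    (φ v ≠ ⊤ → 0 ≤ φ v ∧ φ v ≤ ((W.ncard * G.maxCostOn W : ℕ) : ℤ)) ∧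
    (G.disOwns v → ∃ u ∈ W, G.edge v u ∧ G.Progressive (drel b) mlt μ φ v u) ∧
    (¬G.disOwns v → ∀ u ∈ W, G.edge v u → G.Progressive (drel b) mlt μ φ v u)

lemma prog_transfer (G : MPPGame V) {bR bW g a : ℕ}
    {μ' μW : V → List (List ℕ)} {φ' φW : V → WithTop ℤ} {v u : V}
    (hdw : drel bW = drel bR + 2 * g)
    (hp : G.pri v ≤ drel bR) (hk : 1 ≤ g ∨ G.pri v < drel bR)
    (hcomp : ∀ c ∈ μ' v, c ≠ [])
    (hv : μW v = EmbL a g (μ' v)) (hu : μW u = EmbL a g (μ' u))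
    (hfv : φW v = φ' v) (hfu : φW u = φ' u)
    (h : G.Progressive (drel bR) mlt μ' φ' v u) :
    G.Progressive (drel bW) mlt μW φW v u := by
  rcases h with h | ⟨h1, h2, h3⟩ | ⟨h1, h2, h3⟩
  · left
    show List.Lex mlt (trunc (drel bW) (G.pri v) (μW u)) (μW v)
    rw [hu, hv, EmbL_trunc _ hp hk hdw]
    exact EmbL_mono hcomp h
  · right; left
    refine ⟨?_, h2, by rw [hfv]; exact h3⟩
    show trunc (drel bW) (G.pri v) (μW u) = μW v
    rw [hu, hv, EmbL_trunc _ hp hk hdw, h1]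
  · right; right
    exact ⟨by rw [hu, hv, h1], by rw [hfv]; exact h2, by rw [hfv, hfu]; exact h3⟩

lemma prog_rescue (G : MPPGame V) {d : ℕ} {μ : V → List (List ℕ)}
    {φ : V → WithTop ℤ} {v u : V} (hp : G.pri v < d)
    {x y : ℕ} (hxy : x < y)
    (hu : ∃ c r, μ u = (x :: c) :: r) (hv : ∃ c r, μ v = (y :: c) :: r) :
    G.Progressive d mlt μ φ v u := by
  left
  obtain ⟨cu, ru, hu⟩ := hu; obtain ⟨cv, rv, hv⟩ := hv
  rw [hu, hv]
  show List.Lex mlt (trunc d (G.pri v) ((x :: cu) :: ru)) ((y :: cv) :: rv)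
  rw [trunc]
  cases hc : (d + 1 - G.pri v) / 2 with
  | zero => omega
  | succ m =>
    rw [List.take_succ_cons]
    exact List.Lex.rel (List.Lex.rel hxy)

lemma prog_rescue_nil (G : MPPGame V) {d : ℕ} {μ : V → List (List ℕ)}
    {φ : V → WithTop ℤ} {v u : V}
    (hu : μ u = []) (hv : μ v ≠ []) :
    G.Progressive d mlt μ φ v u := by
  left
  show List.Lex mlt (trunc d (G.pri v) (μ u)) (μ v)
  rw [hu, trunc, List.take_nil]
  exact lex_nil_lt hv

lemma prog_top (G : MPPGame V) {b : ℕ} {μ : V → List (List ℕ)}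
    {φ : V → WithTop ℤ} {v u : V} (hbe : Even b) (hpv : G.pri v = b)
    (hv : μ v = []) (hφ : φ v = ⊤) :
    G.Progressive (drel b) mlt μ φ v u := by
  right; left
  refine ⟨?_, by rw [hpv]; exact hbe, hφ⟩
  show trunc (drel b) (G.pri v) (μ u) = μ v
  rw [hv, trunc, hpv, drel_of_even hbe, show (b + 1 - b) / 2 = 0 by omega,
    List.take_zero]

lemma decomp_top (G : MPPGame V) {b : ℕ} {W : Set V} (h : G.DisDecomp b W) :
    ∃ v ∈ W, G.pri v = b := by
  cases h with
  | even b b' W R T B τ hb hsub hpart hB hBne htop hreach hb' hR =>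
    obtain ⟨v, hv⟩ := hBne
    rw [hB] at hv
    exact ⟨v, hv.1, hv.2⟩
  | oddRec b b' b'' W U T R τ hb hsub hpart htop htop' hRne htrap hb1 hR hreach hb2 hU =>
    exact htop'
  | oddMP b b'' W U T R τ σ hb hsub hpart htop htop' hRne htrap hsig hreach hb2 hU =>
    exact htop'

end Transfer

section Main

variable {V : Type} [Fintype V]

lemma even_sub_even {a c : ℕ} (ha : Even a) (hc : Even c) (h : c ≤ a) :
    ∃ k, a = c + 2 * k := by
  obtain ⟨r, hr⟩ := ha; obtain ⟨s, hs⟩ := hc; exact ⟨r - s, by omega⟩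

lemma drel_even' (b : ℕ) : Even (drel b) := ⟨(b + 1) / 2, by rw [drel]; omega⟩

lemma pkg_of_decomp (G : MPPGame V) :
    ∀ (b : ℕ) (W : Set V), G.DisDecomp b W →
      ∃ μ φ, Pkg G b W μ φ := by
  intro b W h
  induction h with
  | even b b' W R T B τ hb hsub hpart hB hBne htop hreach hb' hR ihR =>
    classical
    -- subsets
    have hRW : R ⊆ W := by
      rw [← hpart.1]; exact subset_trans Set.subset_union_left Set.subset_union_left
    have hTW : T ⊆ W := by
      rw [← hpart.1]; exact subset_trans Set.subset_union_right Set.subset_union_left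
    have hBW : B ⊆ W := by
      rw [← hpart.1]; exact Set.subset_union_right
    have hRB : ∀ v ∈ R, v ∉ B := fun v hv => Set.disjoint_left.mp hpart.2.2.1 hv
    -- attractor of B
    obtain ⟨A, rank, hAW, hAZ, hrk1, hAdis, hAcon, hAreach⟩ :=
      attractor V G W B τ hreach.1 hsub.2
    have hTA : ∀ v ∈ T, v ∈ A := by
      intro v hv
      exact hAreach T hreach.2 v hv (hTW hv)
        (Set.disjoint_left.mp hpart.2.2.2 hv)
    have hcls : ∀ v ∈ W, v ∉ B → v ∉ A → v ∈ R := by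
      intro v hvW hvB hvA
      have : v ∈ R ∪ T ∪ B := hpart.1.symm ▸ hvW
      rcases this with (h1 | h1) | h1
      · exact h1
      · exact absurd (hTA v h1) hvA
      · exact absurd h1 hvB
    have hpri_lt : ∀ v ∈ W, v ∉ B → G.pri v < b := by
      intro v hvW hvB
      have h1 := htop v hvW
      have h2 : G.pri v ≠ b := by
        intro hc
        exact hvB (by rw [hB]; exact ⟨hvW, hc⟩)
      omega
    -- recursion on R
    obtain ⟨μ', φ', hPkg'⟩ : ∃ μ' φ', R.Nonempty → Pkg G b' R μ' φ' := by
      rcases em R.Nonempty with h | h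
      · obtain ⟨μ', φ', hp⟩ := ihR h; exact ⟨μ', φ', fun _ => hp⟩
      · exact ⟨fun _ => [], fun _ => ⊤, fun hc => absurd hc h⟩
    set g : ℕ := (b - drel b') / 2 with hgdef
    set N : ℕ := Finset.univ.sup rank + 1 with hNdef
    have hrankN : ∀ u : V, rank u < N := fun u =>
      lt_of_le_of_lt (Finset.le_sup (Finset.mem_univ u)) (Nat.lt_succ_self _)
    set μW : V → List (List ℕ) := fun v =>
      if v ∈ B then [] else if v ∈ A then [[rank v]] else EmbL N g (μ' v) with hμdef
    set φW : V → WithTop ℤ := fun v =>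
      if v ∈ B then ⊤ else if v ∈ A then ((0 : ℤ) : WithTop ℤ) else φ' v with hφdef
    have hμB : ∀ v ∈ B, μW v = [] := by intro v hv; simp [hμdef, hv]
    have hφB : ∀ v ∈ B, φW v = ⊤ := by intro v hv; simp [hφdef, hv]
    have hμA : ∀ v, v ∉ B → v ∈ A → μW v = [[rank v]] := by
      intro v h1 h2; simp [hμdef, h1, h2]
    have hφA : ∀ v, v ∉ B → v ∈ A → φW v = ((0 : ℤ) : WithTop ℤ) := by
      intro v h1 h2; simp [hφdef, h1, h2]
    have hμR : ∀ v, v ∉ B → v ∉ A → μW v = EmbL N g (μ' v) := by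
      intro v h1 h2; simp [hμdef, h1, h2]
    have hφR : ∀ v, v ∉ B → v ∉ A → φW v = φ' v := by
      intro v h1 h2; simp [hφdef, h1, h2]
    have hdrb : drel b = b := drel_of_even hb
    -- facts valid for nonempty R
    have hgfact : R.Nonempty → drel b = drel b' + 2 * g := by
      intro hRne
      have hb'b : b' < b := hb' hRne
      have hdl : drel b' ≤ b := le_trans (drel_le_succ b') (by omega)
      obtain ⟨k, hk⟩ := even_sub_even hb (drel_even' b') hdl
      rw [hdrb, hgdef]
      omega
    have hkfact : ∀ v ∈ R, 1 ≤ g ∨ G.pri v < drel b' := by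
      intro v hvR
      have hRne : R.Nonempty := ⟨v, hvR⟩
      have hb'b : b' < b := hb' hRne
      have hpv : G.pri v ≤ b' := ((hPkg' hRne).2 v hvR).1
      rcases Nat.even_or_odd b' with he | ho
      · left
        have h1 : drel b' = b' := drel_of_even he
        obtain ⟨r, hr⟩ := hb; obtain ⟨s, hs⟩ := he
        rw [hgdef, h1]; omega
      · right
        rw [drel_of_odd ho]; omega
    -- the embedding transfer, specialized
    have htrans : ∀ v ∈ R, v ∉ A → ∀ u ∈ R, u ∉ A →
        G.Progressive (drel b') mlt μ' φ' v u →
        G.Progressive (drel b) mlt μW φW v u := by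
      intro v hvR hvA u huR huA hprog
      have hRne : R.Nonempty := ⟨v, hvR⟩
      exact prog_transfer G (hgfact hRne)
        (le_trans ((hPkg' hRne).2 v hvR).1 (le_drel b'))
        (hkfact v hvR) ((hPkg' hRne).1 v hvR)
        (hμR v (hRB v hvR) hvA) (hμR u (hRB u huR) huA)
        (hφR v (hRB v hvR) hvA) (hφR u (hRB u huR) huA) hprog
    refine ⟨μW, φW, ?_, ?_⟩
    · -- nonempty components
      intro v hvW c hc
      by_cases h1 : v ∈ B
      · rw [hμB v h1] at hc; exact absurd hc List.not_mem_nil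
      · by_cases h2 : v ∈ A
        · rw [hμA v h1 h2] at hc
          simp at hc; simp [hc]
        · have hvR := hcls v hvW h1 h2
          have hRne : R.Nonempty := ⟨v, hvR⟩
          rw [hμR v h1 h2] at hc
          exact EmbL_comps_ne_nil N ((hPkg' hRne).1 v hvR) hc
    intro v hvW
    refine ⟨htop v hvW, ?_, ?_, ?_, ?_, ?_⟩
    all_goals by_cases h1 : v ∈ B
    -- L1, v ∈ B
    · refine ⟨b + 1, ?_, le_trans (htop v hvW) (by omega), ?_⟩
      · obtain ⟨r, hr⟩ := hb; exact ⟨r, by omega⟩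
      · rw [hμB v h1, hdrb]; simp
    -- L1, v ∉ B
    · by_cases h2 : v ∈ A
      · have hblt := hpri_lt v hvW h1
        refine ⟨b - 1, ?_, by omega, ?_⟩
        · obtain ⟨r, hr⟩ := hb; exact ⟨r - 1, by omega⟩
        · rw [hμA v h1 h2, hdrb]
          simp only [List.length_singleton]
          omega
      · have hvR := hcls v hvW h1 h2
        have hRne : R.Nonempty := ⟨v, hvR⟩
        obtain ⟨l, hlodd, hlpri, hleq⟩ := ((hPkg' hRne).2 v hvR).2.1
        by_cases h3 : g = 0 ∧ μ' v = []
        · have hblt := hpri_lt v hvW h1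
          refine ⟨b - 1, ?_, by omega, ?_⟩
          · obtain ⟨r, hr⟩ := hb; exact ⟨r - 1, by omega⟩
          · rw [hμR v h1 h2, h3.2, h3.1, EmbL_nilnil, hdrb]
            simp only [List.length_singleton]
            omega
        · refine ⟨l, hlodd, hlpri, ?_⟩
          rw [hμR v h1 h2, EmbL_length h3, hdrb]
          have := hgfact hRne
          rw [hdrb] at this
          omega
    -- L2, v ∈ B
    · intro _
      have hpv : G.pri v = b := by
        have := hB ▸ h1; exact this.2
      rw [hμB v h1, hdrb, hpv]; simp
    -- L2, v ∉ B
    · by_cases h2 : v ∈ A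
      · intro hc
        rw [hφA v h1 h2] at hc
        exact absurd hc (by simp)
      · have hvR := hcls v hvW h1 h2
        have hRne : R.Nonempty := ⟨v, hvR⟩
        intro hc
        rw [hφR v h1 h2] at hc
        have hrec := ((hPkg' hRne).2 v hvR).2.2.1 hc
        have hgf := hgfact hRne
        by_cases h3 : g = 0 ∧ μ' v = []
        · exfalso
          rw [h3.2] at hrec
          simp at hrec
          have := hpri_lt v hvW h1
          rw [hdrb] at hgf
          omega
        · rw [hμR v h1 h2, EmbL_length h3]
          rw [hdrb] at hgf ⊢
          omega
    -- L3, v ∈ B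
    · intro hc
      exact absurd (hφB v h1) hc
    -- L3, v ∉ B
    · by_cases h2 : v ∈ A
      · intro _
        rw [hφA v h1 h2]
        constructor
        · exact_mod_cast le_refl (0 : ℤ)
        · exact_mod_cast Int.ofNat_nonneg _
      · have hvR := hcls v hvW h1 h2
        have hRne : R.Nonempty := ⟨v, hvR⟩
        intro hc
        rw [hφR v h1 h2] at hc ⊢
        obtain ⟨ha, hbnd⟩ := ((hPkg' hRne).2 v hvR).2.2.2.1 hc
        refine ⟨ha, le_trans hbnd ?_⟩
        exact_mod_cast WithTop.coe_le_coe.mpr (bound_mono G hRW)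
    -- P-Dis, v ∈ B
    · intro hdis
      obtain ⟨u, huW, he⟩ := hsub.2 v hvW
      have hpv : G.pri v = b := (hB ▸ h1).2
      exact ⟨u, huW, he, prog_top G hb hpv (hμB v h1) (hφB v h1)⟩
    -- P-Dis, v ∉ B
    · intro hdis
      by_cases h2 : v ∈ A
      · refine ⟨τ v, (hreach.1 v hvW hdis).2, (hreach.1 v hvW hdis).1, ?_⟩
        rcases hAdis v h2 hdis with h3 | ⟨h3, h4⟩
        · exact prog_rescue_nil G (hμB _ h3) (by rw [hμA v h1 h2]; simp)
        · refine prog_rescue G (by rw [hdrb]; exact hpri_lt v hvW h1) h4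
            ⟨[], [], by rw [hμA _ (hAZ _ h3) h3]⟩ ⟨[], [], by rw [hμA v h1 h2]⟩
      · have hvR := hcls v hvW h1 h2
        have hRne : R.Nonempty := ⟨v, hvR⟩
        obtain ⟨u, huR, he, hprog⟩ := ((hPkg' hRne).2 v hvR).2.2.2.2.1 hdis
        refine ⟨u, hRW huR, he, ?_⟩
        by_cases h3 : u ∈ A
        · refine prog_rescue G (by rw [hdrb]; exact hpri_lt v hvW h1)
            (hrankN u) ⟨[], [], by rw [hμA u (hRB u huR) h3]⟩ ?_
          obtain ⟨c, r, hcr⟩ := EmbL_head N g (μ' v)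
          exact ⟨c, r, by rw [hμR v h1 h2]; exact hcr⟩
        · exact htrans v hvR h2 u huR h3 hprog
    -- P-Con, v ∈ B
    · intro hdis u huW he
      have hpv : G.pri v = b := (hB ▸ h1).2
      exact prog_top G hb hpv (hμB v h1) (hφB v h1)
    -- P-Con, v ∉ B
    · intro hdis u huW he
      by_cases h2 : v ∈ A
      · rcases hAcon v h2 hdis u huW he with h3 | ⟨h3, h4⟩
        · exact prog_rescue_nil G (hμB _ h3) (by rw [hμA v h1 h2]; simp)
        · exact prog_rescue G (by rw [hdrb]; exact hpri_lt v hvW h1) h4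
            ⟨[], [], by rw [hμA _ (hAZ _ h3) h3]⟩ ⟨[], [], by rw [hμA v h1 h2]⟩
      · have hvR := hcls v hvW h1 h2
        have hRne : R.Nonempty := ⟨v, hvR⟩
        by_cases h3 : u ∈ B
        · exact prog_rescue_nil G (hμB u h3) (by rw [hμR v h1 h2]; exact EmbL_ne_nil _ _ _)
        · by_cases h4 : u ∈ A
          · refine prog_rescue G (by rw [hdrb]; exact hpri_lt v hvW h1)
              (hrankN u) ⟨[], [], by rw [hμA u h3 h4]⟩ ?_
            obtain ⟨c, r, hcr⟩ := EmbL_head N g (μ' v)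
            exact ⟨c, r, by rw [hμR v h1 h2]; exact hcr⟩
          · have huR := hcls u huW h3 h4
            exact htrans v hvR h2 u huR h4
              (((hPkg' hRne).2 v hvR).2.2.2.2.2 hdis u huR he)
  | oddRec b b' b'' W U T R τ hb hsub hpart htop htop' hRne htrap hb1 hR hreach hb2 hU ihR ihU =>
    classical
    have hdrb : drel b = b + 1 := drel_of_odd hb
    have hUW : U ⊆ W := by
      rw [← hpart.1]; exact subset_trans Set.subset_union_left Set.subset_union_left
    have hTW : T ⊆ W := by
      rw [← hpart.1]; exact subset_trans Set.subset_union_right Set.subset_union_left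
    have hRW : R ⊆ W := by
      rw [← hpart.1]; exact Set.subset_union_right
    have hUR : ∀ v ∈ U, v ∉ R := fun v hv => Set.disjoint_left.mp hpart.2.2.1 hv
    obtain ⟨A, rank, hAW, hAZ, hrk1, hAdis, hAcon, hAreach⟩ :=
      attractor V G W R τ hreach.1 hsub.2
    have hTA : ∀ v ∈ T, v ∈ A := by
      intro v hv
      exact hAreach T hreach.2 v hv (hTW hv)
        (Set.disjoint_left.mp hpart.2.2.2 hv)
    have hcls : ∀ v ∈ W, v ∉ R → v ∉ A → v ∈ U := by
      intro v hvW hvR hvA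
      have : v ∈ U ∪ T ∪ R := hpart.1.symm ▸ hvW
      rcases this with (h1 | h1) | h1
      · exact h1
      · exact absurd (hTA v h1) hvA
      · exact absurd h1 hvR
    have hplt : ∀ v ∈ W, G.pri v < drel b := by
      intro v hvW; rw [hdrb]; exact lt_of_le_of_lt (htop v hvW) (by omega)
    -- recursion on R (unconditional) and U (conditional)
    obtain ⟨μR, φR, hPkgR⟩ := ihR
    obtain ⟨μU, φU, hPkgU⟩ : ∃ μU φU, U.Nonempty → Pkg G b'' U μU φU := by
      rcases em U.Nonempty with h | h
      · obtain ⟨μU, φU, hp⟩ := ihU h; exact ⟨μU, φU, fun _ => hp⟩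
      · exact ⟨fun _ => [], fun _ => ⊤, fun hc => absurd hc h⟩
    set gR : ℕ := (b + 1 - drel b') / 2 with hgRdef
    set gU : ℕ := (b + 1 - drel b'') / 2 with hgUdef
    have hdb' : drel b' ≤ b - 1 := by
      rcases Nat.even_or_odd b' with he | ho
      · rw [drel_of_even he]
        obtain ⟨r, hr⟩ := hb; obtain ⟨s, hs⟩ := he; omega
      · rw [drel_of_odd ho]
        obtain ⟨r, hr⟩ := hb; obtain ⟨s, hs⟩ := ho; omega
    have hgR1 : 1 ≤ gR := by
      rw [hgRdef]
      obtain ⟨k, hk⟩ := even_sub_even (drel_even' b) (drel_even' b') (by rw [hdrb]; omega)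
      rw [hdrb] at hk; omega
    have hgRfact : drel b = drel b' + 2 * gR := by
      obtain ⟨k, hk⟩ := even_sub_even (drel_even' b) (drel_even' b') (by rw [hdrb]; omega)
      rw [hdrb] at hk ⊢; rw [hgRdef]; omega
    have hgUfact : U.Nonempty → drel b = drel b'' + 2 * gU := by
      intro hUne
      have h1 : b'' ≤ b := hb2 hUne
      have h2 : drel b'' ≤ drel b := by
        rw [hdrb]; exact le_trans (drel_le_succ b'') (by omega)
      obtain ⟨k, hk⟩ := even_sub_even (drel_even' b) (drel_even' b'') h2
      rw [hdrb] at hk ⊢; rw [hgUdef]; omega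
    have hkU : ∀ v ∈ U, 1 ≤ gU ∨ G.pri v < drel b'' := by
      intro v hvU
      have hUne : U.Nonempty := ⟨v, hvU⟩
      have hpv : G.pri v ≤ b'' := ((hPkgU hUne).2 v hvU).1
      rcases Nat.even_or_odd b'' with he | ho
      · left
        have h1 : drel b'' = b'' := drel_of_even he
        have h2 : b'' ≤ b := hb2 hUne
        obtain ⟨r, hr⟩ := hb; obtain ⟨s, hs⟩ := he
        rw [hgUdef, h1]; omega
      · right
        rw [drel_of_odd ho]; omega
    set N : ℕ := Finset.univ.sup rank + 1 with hNdef
    have hrankN : ∀ u : V, rank u < N := fun u =>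
      lt_of_le_of_lt (Finset.le_sup (Finset.mem_univ u)) (Nat.lt_succ_self _)
    set μW : V → List (List ℕ) := fun v =>
      if v ∈ R then EmbL 0 gR (μR v)
      else if v ∈ A then [[rank v]] else EmbL N gU (μU v) with hμdef
    set φW : V → WithTop ℤ := fun v =>
      if v ∈ R then φR v
      else if v ∈ A then ((0 : ℤ) : WithTop ℤ) else φU v with hφdef
    have hμRe : ∀ v ∈ R, μW v = EmbL 0 gR (μR v) := by intro v hv; simp [hμdef, hv]
    have hφRe : ∀ v ∈ R, φW v = φR v := by intro v hv; simp [hφdef, hv]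
    have hμA : ∀ v, v ∉ R → v ∈ A → μW v = [[rank v]] := by
      intro v h1 h2; simp [hμdef, h1, h2]
    have hφA : ∀ v, v ∉ R → v ∈ A → φW v = ((0 : ℤ) : WithTop ℤ) := by
      intro v h1 h2; simp [hφdef, h1, h2]
    have hμU : ∀ v, v ∉ R → v ∉ A → μW v = EmbL N gU (μU v) := by
      intro v h1 h2; simp [hμdef, h1, h2]
    have hφU : ∀ v, v ∉ R → v ∉ A → φW v = φU v := by
      intro v h1 h2; simp [hφdef, h1, h2]
    -- transfers
    have htransR : ∀ v ∈ R, ∀ u ∈ R,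
        G.Progressive (drel b') mlt μR φR v u →
        G.Progressive (drel b) mlt μW φW v u := by
      intro v hvR u huR hprog
      exact prog_transfer G hgRfact
        (le_trans ((hPkgR).2 v hvR).1 (le_drel b')) (Or.inl hgR1)
        ((hPkgR).1 v hvR) (hμRe v hvR) (hμRe u huR)
        (hφRe v hvR) (hφRe u huR) hprog
    have htransU : ∀ v ∈ U, v ∉ A → ∀ u ∈ U, u ∉ A →
        G.Progressive (drel b'') mlt μU φU v u →
        G.Progressive (drel b) mlt μW φW v u := by
      intro v hvU hvA u huU huA hprog
      have hUne : U.Nonempty := ⟨v, hvU⟩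
      exact prog_transfer G (hgUfact hUne)
        (le_trans ((hPkgU hUne).2 v hvU).1 (le_drel b'')) (hkU v hvU)
        ((hPkgU hUne).1 v hvU)
        (hμU v (hUR v hvU) hvA) (hμU u (hUR u huU) huA)
        (hφU v (hUR v hvU) hvA) (hφU u (hUR u huU) huA) hprog
    have hheadR : ∀ u ∈ R, ∃ c r, μW u = (0 :: c) :: r := by
      intro u huR
      obtain ⟨c, r, hcr⟩ := EmbL_head 0 gR (μR u)
      exact ⟨c, r, by rw [hμRe u huR]; exact hcr⟩
    have hheadU : ∀ v, v ∉ R → v ∉ A → ∃ c r, μW v = (N :: c) :: r := by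
      intro v h1 h2
      obtain ⟨c, r, hcr⟩ := EmbL_head N gU (μU v)
      exact ⟨c, r, by rw [hμU v h1 h2]; exact hcr⟩
    refine ⟨μW, φW, ?_, ?_⟩
    · -- nonempty components
      intro v hvW c hc
      by_cases h1 : v ∈ R
      · rw [hμRe v h1] at hc
        exact EmbL_comps_ne_nil 0 ((hPkgR).1 v h1) hc
      · by_cases h2 : v ∈ A
        · rw [hμA v h1 h2] at hc
          simp at hc; simp [hc]
        · have hvU := hcls v hvW h1 h2
          have hUne : U.Nonempty := ⟨v, hvU⟩
          rw [hμU v h1 h2] at hc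
          exact EmbL_comps_ne_nil N ((hPkgU hUne).1 v hvU) hc
    intro v hvW
    refine ⟨htop v hvW, ?_, ?_, ?_, ?_, ?_⟩
    all_goals by_cases h1 : v ∈ R
    -- L1, v ∈ R
    · obtain ⟨l, hlodd, hlpri, hleq⟩ := ((hPkgR).2 v h1).2.1
      refine ⟨l, hlodd, hlpri, ?_⟩
      rw [hμRe v h1, EmbL_length (by omega : ¬(gR = 0 ∧ μR v = []))]
      omega
    -- L1, v ∉ R
    · by_cases h2 : v ∈ A
      · refine ⟨b, hb, htop v hvW, ?_⟩
        rw [hμA v h1 h2, hdrb]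
        simp only [List.length_singleton]
        omega
      · have hvU := hcls v hvW h1 h2
        have hUne : U.Nonempty := ⟨v, hvU⟩
        obtain ⟨l, hlodd, hlpri, hleq⟩ := ((hPkgU hUne).2 v hvU).2.1
        by_cases h3 : gU = 0 ∧ μU v = []
        · refine ⟨b, hb, htop v hvW, ?_⟩
          rw [hμU v h1 h2, h3.2, h3.1, EmbL_nilnil, hdrb]
          simp only [List.length_singleton]
          omega
        · refine ⟨l, hlodd, hlpri, ?_⟩
          rw [hμU v h1 h2, EmbL_length h3]
          have := hgUfact hUne
          omega
    -- L2, v ∈ R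
    · intro hc
      rw [hφRe v h1] at hc
      have hrec := ((hPkgR).2 v h1).2.2.1 hc
      rw [hμRe v h1, EmbL_length (by omega : ¬(gR = 0 ∧ μR v = []))]
      omega
    -- L2, v ∉ R
    · by_cases h2 : v ∈ A
      · intro hc
        rw [hφA v h1 h2] at hc
        exact absurd hc (by simp)
      · have hvU := hcls v hvW h1 h2
        have hUne : U.Nonempty := ⟨v, hvU⟩
        intro hc
        rw [hφU v h1 h2] at hc
        have hrec := ((hPkgU hUne).2 v hvU).2.2.1 hc
        have hgf := hgUfact hUne
        by_cases h3 : gU = 0 ∧ μU v = []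
        · exfalso
          rw [h3.2] at hrec
          simp at hrec
          have h4 := ((hPkgU hUne).2 v hvU).1
          have h5 : b'' ≤ b := hb2 hUne
          have h6 := drel_le_succ b''
          rw [hdrb] at hgf
          omega
        · rw [hμU v h1 h2, EmbL_length h3]
          omega
    -- L3, v ∈ R
    · intro hc
      rw [hφRe v h1] at hc ⊢
      obtain ⟨ha, hbnd⟩ := ((hPkgR).2 v h1).2.2.2.1 hc
      refine ⟨ha, le_trans hbnd ?_⟩
      exact_mod_cast WithTop.coe_le_coe.mpr (bound_mono G hRW)
    -- L3, v ∉ R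
    · by_cases h2 : v ∈ A
      · intro _
        rw [hφA v h1 h2]
        constructor
        · exact_mod_cast le_refl (0 : ℤ)
        · exact_mod_cast Int.ofNat_nonneg _
      · have hvU := hcls v hvW h1 h2
        have hUne : U.Nonempty := ⟨v, hvU⟩
        intro hc
        rw [hφU v h1 h2] at hc ⊢
        obtain ⟨ha, hbnd⟩ := ((hPkgU hUne).2 v hvU).2.2.2.1 hc
        refine ⟨ha, le_trans hbnd ?_⟩
        exact_mod_cast WithTop.coe_le_coe.mpr (bound_mono G hUW)
    -- P-Dis, v ∈ R
    · intro hdis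
      obtain ⟨u, huR, he, hprog⟩ := ((hPkgR).2 v h1).2.2.2.2.1 hdis
      exact ⟨u, hRW huR, he, htransR v h1 u huR hprog⟩
    -- P-Dis, v ∉ R
    · intro hdis
      by_cases h2 : v ∈ A
      · refine ⟨τ v, (hreach.1 v hvW hdis).2, (hreach.1 v hvW hdis).1, ?_⟩
        rcases hAdis v h2 hdis with h3 | ⟨h3, h4⟩
        · exact prog_rescue G (hplt v hvW) (hrk1 v h2) (hheadR _ h3)
            ⟨[], [], by rw [hμA v h1 h2]⟩
        · exact prog_rescue G (hplt v hvW) h4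
            ⟨[], [], by rw [hμA _ (hAZ _ h3) h3]⟩ ⟨[], [], by rw [hμA v h1 h2]⟩
      · have hvU := hcls v hvW h1 h2
        have hUne : U.Nonempty := ⟨v, hvU⟩
        obtain ⟨u, huU, he, hprog⟩ := ((hPkgU hUne).2 v hvU).2.2.2.2.1 hdis
        refine ⟨u, hUW huU, he, ?_⟩
        by_cases h3 : u ∈ A
        · exact prog_rescue G (hplt v hvW) (hrankN u)
            ⟨[], [], by rw [hμA u (hUR u huU) h3]⟩ (hheadU v h1 h2)
        · exact htransU v hvU h2 u huU h3 hprog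
    -- P-Con, v ∈ R
    · intro hdis u huW he
      have huR : u ∈ R := (htrap v h1).1 hdis u huW he
      exact htransR v h1 u huR (((hPkgR).2 v h1).2.2.2.2.2 hdis u huR he)
    -- P-Con, v ∉ R
    · intro hdis u huW he
      by_cases h2 : v ∈ A
      · rcases hAcon v h2 hdis u huW he with h3 | ⟨h3, h4⟩
        · exact prog_rescue G (hplt v hvW) (hrk1 v h2) (hheadR _ h3)
            ⟨[], [], by rw [hμA v h1 h2]⟩
        · exact prog_rescue G (hplt v hvW) h4
            ⟨[], [], by rw [hμA _ (hAZ _ h3) h3]⟩ ⟨[], [], by rw [hμA v h1 h2]⟩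
      · have hvU := hcls v hvW h1 h2
        have hUne : U.Nonempty := ⟨v, hvU⟩
        by_cases h3 : u ∈ R
        · exact prog_rescue G (hplt v hvW) (by omega : 0 < N) (hheadR u h3)
            (hheadU v h1 h2)
        · by_cases h4 : u ∈ A
          · exact prog_rescue G (hplt v hvW) (hrankN u)
              ⟨[], [], by rw [hμA u h3 h4]⟩ (hheadU v h1 h2)
          · have huU := hcls u huW h3 h4
            exact htransU v hvU h2 u huU h4
              (((hPkgU hUne).2 v hvU).2.2.2.2.2 hdis u huU he)
  | oddMP b b'' W U T R τ σ hb hsub hpart htop htop' hRne htrap hsig hreach hb2 hU ihU =>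
    classical
    have hdrb : drel b = b + 1 := drel_of_odd hb
    have hUW : U ⊆ W := by
      rw [← hpart.1]; exact subset_trans Set.subset_union_left Set.subset_union_left
    have hTW : T ⊆ W := by
      rw [← hpart.1]; exact subset_trans Set.subset_union_right Set.subset_union_left
    have hRW : R ⊆ W := by
      rw [← hpart.1]; exact Set.subset_union_right
    have hUR : ∀ v ∈ U, v ∉ R := fun v hv => Set.disjoint_left.mp hpart.2.2.1 hv
    obtain ⟨A, rank, hAW, hAZ, hrk1, hAdis, hAcon, hAreach⟩ :=
      attractor V G W R τ hreach.1 hsub.2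
    have hTA : ∀ v ∈ T, v ∈ A := by
      intro v hv
      exact hAreach T hreach.2 v hv (hTW hv)
        (Set.disjoint_left.mp hpart.2.2.2 hv)
    have hcls : ∀ v ∈ W, v ∉ R → v ∉ A → v ∈ U := by
      intro v hvW hvR hvA
      have : v ∈ U ∪ T ∪ R := hpart.1.symm ▸ hvW
      rcases this with (h1 | h1) | h1
      · exact h1
      · exact absurd (hTA v h1) hvA
      · exact absurd h1 hvR
    have hplt : ∀ v ∈ W, G.pri v < drel b := by
      intro v hvW; rw [hdrb]; exact lt_of_le_of_lt (htop v hvW) (by omega)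
    obtain ⟨φE, hφE⟩ := energy_potential G hsig
    obtain ⟨μU, φU, hPkgU⟩ : ∃ μU φU, U.Nonempty → Pkg G b'' U μU φU := by
      rcases em U.Nonempty with h | h
      · obtain ⟨μU, φU, hp⟩ := ihU h; exact ⟨μU, φU, fun _ => hp⟩
      · exact ⟨fun _ => [], fun _ => ⊤, fun hc => absurd hc h⟩
    set gU : ℕ := (b + 1 - drel b'') / 2 with hgUdef
    have hgUfact : U.Nonempty → drel b = drel b'' + 2 * gU := by
      intro hUne
      have h1 : b'' ≤ b := hb2 hUne
      have h2 : drel b'' ≤ drel b := by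
        rw [hdrb]; exact le_trans (drel_le_succ b'') (by omega)
      obtain ⟨k, hk⟩ := even_sub_even (drel_even' b) (drel_even' b'') h2
      rw [hdrb] at hk ⊢; rw [hgUdef]; omega
    have hkU : ∀ v ∈ U, 1 ≤ gU ∨ G.pri v < drel b'' := by
      intro v hvU
      have hUne : U.Nonempty := ⟨v, hvU⟩
      have hpv : G.pri v ≤ b'' := ((hPkgU hUne).2 v hvU).1
      rcases Nat.even_or_odd b'' with he | ho
      · left
        have h1 : drel b'' = b'' := drel_of_even he
        have h2 : b'' ≤ b := hb2 hUne
        obtain ⟨r, hr⟩ := hb; obtain ⟨s, hs⟩ := he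
        rw [hgUdef, h1]; omega
      · right
        rw [drel_of_odd ho]; omega
    set N : ℕ := Finset.univ.sup rank + 1 with hNdef
    have hrankN : ∀ u : V, rank u < N := fun u =>
      lt_of_le_of_lt (Finset.le_sup (Finset.mem_univ u)) (Nat.lt_succ_self _)
    set μW : V → List (List ℕ) := fun v =>
      if v ∈ R then [[0]]
      else if v ∈ A then [[rank v]] else EmbL N gU (μU v) with hμdef
    set φW : V → WithTop ℤ := fun v =>
      if v ∈ R then ((φE v : ℤ) : WithTop ℤ)
      else if v ∈ A then ((0 : ℤ) : WithTop ℤ) else φU v with hφdef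
    have hμRe : ∀ v ∈ R, μW v = [[0]] := by intro v hv; simp [hμdef, hv]
    have hφRe : ∀ v ∈ R, φW v = ((φE v : ℤ) : WithTop ℤ) := by
      intro v hv; simp [hφdef, hv]
    have hμA : ∀ v, v ∉ R → v ∈ A → μW v = [[rank v]] := by
      intro v h1 h2; simp [hμdef, h1, h2]
    have hφA : ∀ v, v ∉ R → v ∈ A → φW v = ((0 : ℤ) : WithTop ℤ) := by
      intro v h1 h2; simp [hφdef, h1, h2]
    have hμU : ∀ v, v ∉ R → v ∉ A → μW v = EmbL N gU (μU v) := by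
      intro v h1 h2; simp [hμdef, h1, h2]
    have hφU : ∀ v, v ∉ R → v ∉ A → φW v = φU v := by
      intro v h1 h2; simp [hφdef, h1, h2]
    have htransU : ∀ v ∈ U, v ∉ A → ∀ u ∈ U, u ∉ A →
        G.Progressive (drel b'') mlt μU φU v u →
        G.Progressive (drel b) mlt μW φW v u := by
      intro v hvU hvA u huU huA hprog
      have hUne : U.Nonempty := ⟨v, hvU⟩
      exact prog_transfer G (hgUfact hUne)
        (le_trans ((hPkgU hUne).2 v hvU).1 (le_drel b'')) (hkU v hvU)
        ((hPkgU hUne).1 v hvU)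
        (hμU v (hUR v hvU) hvA) (hμU u (hUR u huU) huA)
        (hφU v (hUR v hvU) hvA) (hφU u (hUR u huU) huA) hprog
    have hheadR : ∀ u ∈ R, ∃ c r, μW u = ((0 : ℕ) :: c) :: r := by
      intro u huR
      exact ⟨[], [], by rw [hμRe u huR]⟩
    have hheadU : ∀ v, v ∉ R → v ∉ A → ∃ c r, μW v = (N :: c) :: r := by
      intro v h1 h2
      obtain ⟨c, r, hcr⟩ := EmbL_head N gU (μU v)
      exact ⟨c, r, by rw [hμU v h1 h2]; exact hcr⟩
    -- progressiveness inside R (mean-payoff part)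
    have hprogR : ∀ v ∈ R, ∀ u ∈ R, G.edge v u →
        φE u ≤ φE v + G.cost v u → G.Progressive (drel b) mlt μW φW v u := by
      intro v hvR u huR he hle
      right; right
      refine ⟨by rw [hμRe u huR, hμRe v hvR], ?_, ?_⟩
      · rw [hφRe v hvR]; exact WithTop.coe_ne_top
      · rw [hφRe v hvR, hφRe u huR, ← WithTop.coe_add]
        exact WithTop.coe_le_coe.mpr hle
    refine ⟨μW, φW, ?_, ?_⟩
    · -- nonempty components
      intro v hvW c hc
      by_cases h1 : v ∈ R
      · rw [hμRe v h1] at hc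
        simp at hc; simp [hc]
      · by_cases h2 : v ∈ A
        · rw [hμA v h1 h2] at hc
          simp at hc; simp [hc]
        · have hvU := hcls v hvW h1 h2
          have hUne : U.Nonempty := ⟨v, hvU⟩
          rw [hμU v h1 h2] at hc
          exact EmbL_comps_ne_nil N ((hPkgU hUne).1 v hvU) hc
    intro v hvW
    refine ⟨htop v hvW, ?_, ?_, ?_, ?_, ?_⟩
    all_goals by_cases h1 : v ∈ R
    -- L1, v ∈ R
    · refine ⟨b, hb, htop v hvW, ?_⟩
      rw [hμRe v h1, hdrb]
      simp only [List.length_singleton]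
      omega
    -- L1, v ∉ R
    · by_cases h2 : v ∈ A
      · refine ⟨b, hb, htop v hvW, ?_⟩
        rw [hμA v h1 h2, hdrb]
        simp only [List.length_singleton]
        omega
      · have hvU := hcls v hvW h1 h2
        have hUne : U.Nonempty := ⟨v, hvU⟩
        obtain ⟨l, hlodd, hlpri, hleq⟩ := ((hPkgU hUne).2 v hvU).2.1
        by_cases h3 : gU = 0 ∧ μU v = []
        · refine ⟨b, hb, htop v hvW, ?_⟩
          rw [hμU v h1 h2, h3.2, h3.1, EmbL_nilnil, hdrb]
          simp only [List.length_singleton]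
          omega
        · refine ⟨l, hlodd, hlpri, ?_⟩
          rw [hμU v h1 h2, EmbL_length h3]
          have := hgUfact hUne
          omega
    -- L2, v ∈ R
    · intro hc
      rw [hφRe v h1] at hc
      exact absurd hc WithTop.coe_ne_top
    -- L2, v ∉ R
    · by_cases h2 : v ∈ A
      · intro hc
        rw [hφA v h1 h2] at hc
        exact absurd hc (by simp)
      · have hvU := hcls v hvW h1 h2
        have hUne : U.Nonempty := ⟨v, hvU⟩
        intro hc
        rw [hφU v h1 h2] at hc
        have hrec := ((hPkgU hUne).2 v hvU).2.2.1 hc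
        have hgf := hgUfact hUne
        by_cases h3 : gU = 0 ∧ μU v = []
        · exfalso
          rw [h3.2] at hrec
          simp at hrec
          have h4 := ((hPkgU hUne).2 v hvU).1
          have h5 : b'' ≤ b := hb2 hUne
          have h6 := drel_le_succ b''
          rw [hdrb] at hgf
          omega
        · rw [hμU v h1 h2, EmbL_length h3]
          omega
    -- L3, v ∈ R
    · intro _
      rw [hφRe v h1]
      obtain ⟨⟨h0, hbd⟩, -, -⟩ := hφE v h1
      constructor
      · exact_mod_cast WithTop.coe_le_coe.mpr h0
      · exact_mod_cast WithTop.coe_le_coe.mpr (le_trans hbd (bound_mono G hRW))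
    -- L3, v ∉ R
    · by_cases h2 : v ∈ A
      · intro _
        rw [hφA v h1 h2]
        constructor
        · exact_mod_cast le_refl (0 : ℤ)
        · exact_mod_cast Int.ofNat_nonneg _
      · have hvU := hcls v hvW h1 h2
        have hUne : U.Nonempty := ⟨v, hvU⟩
        intro hc
        rw [hφU v h1 h2] at hc ⊢
        obtain ⟨ha, hbnd⟩ := ((hPkgU hUne).2 v hvU).2.2.2.1 hc
        refine ⟨ha, le_trans hbnd ?_⟩
        exact_mod_cast WithTop.coe_le_coe.mpr (bound_mono G hUW)
    -- P-Dis, v ∈ R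
    · intro hdis
      obtain ⟨he, hin⟩ := hsig.1 v h1 hdis
      obtain ⟨-, hD, -⟩ := hφE v h1
      exact ⟨σ v, hRW hin, he, hprogR v h1 (σ v) hin he (hD hdis)⟩
    -- P-Dis, v ∉ R
    · intro hdis
      by_cases h2 : v ∈ A
      · refine ⟨τ v, (hreach.1 v hvW hdis).2, (hreach.1 v hvW hdis).1, ?_⟩
        rcases hAdis v h2 hdis with h3 | ⟨h3, h4⟩
        · exact prog_rescue G (hplt v hvW) (hrk1 v h2) (hheadR _ h3)
            ⟨[], [], by rw [hμA v h1 h2]⟩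
        · exact prog_rescue G (hplt v hvW) h4
            ⟨[], [], by rw [hμA _ (hAZ _ h3) h3]⟩ ⟨[], [], by rw [hμA v h1 h2]⟩
      · have hvU := hcls v hvW h1 h2
        have hUne : U.Nonempty := ⟨v, hvU⟩
        obtain ⟨u, huU, he, hprog⟩ := ((hPkgU hUne).2 v hvU).2.2.2.2.1 hdis
        refine ⟨u, hUW huU, he, ?_⟩
        by_cases h3 : u ∈ A
        · exact prog_rescue G (hplt v hvW) (hrankN u)
            ⟨[], [], by rw [hμA u (hUR u huU) h3]⟩ (hheadU v h1 h2)
        · exact htransU v hvU h2 u huU h3 hprog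
    -- P-Con, v ∈ R
    · intro hdis u huW he
      have huR : u ∈ R := (htrap v h1).1 hdis u huW he
      obtain ⟨-, -, hC⟩ := hφE v h1
      exact hprogR v h1 u huR he (hC hdis u huR he)
    -- P-Con, v ∉ R
    · intro hdis u huW he
      by_cases h2 : v ∈ A
      · rcases hAcon v h2 hdis u huW he with h3 | ⟨h3, h4⟩
        · exact prog_rescue G (hplt v hvW) (hrk1 v h2) (hheadR _ h3)
            ⟨[], [], by rw [hμA v h1 h2]⟩
        · exact prog_rescue G (hplt v hvW) h4
            ⟨[], [], by rw [hμA _ (hAZ _ h3) h3]⟩ ⟨[], [], by rw [hμA v h1 h2]⟩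
      · have hvU := hcls v hvW h1 h2
        have hUne : U.Nonempty := ⟨v, hvU⟩
        by_cases h3 : u ∈ R
        · exact prog_rescue G (hplt v hvW) (by omega : 0 < N) (hheadR u h3)
            (hheadU v h1 h2)
        · by_cases h4 : u ∈ A
          · exact prog_rescue G (hplt v hvW) (hrankN u)
              ⟨[], [], by rw [hμA u h3 h4]⟩ (hheadU v h1 h2)
          · have huU := hcls u huW h3 h4
            exact htransU v hvU h2 u huU h4
              (((hPkgU hUne).2 v hvU).2.2.2.2.2 hdis u huU he)

end Main

/-- If the whole vertex set, viewed as a subgame, has a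
strategy decomposition for Dis, then there is a progress measure for the game
(over some linearly ordered set `M`), where priorities are bounded by the even
number `d`. -/
theorem dis_decomposition_to_progress_measure
    {V : Type} [Fintype V] (G : MPPGame V)
    (d : ℕ) (hd : Even d) (hpri : ∀ v, G.pri v ≤ d)
    (hdec : ∃ b, G.DisDecomp b Set.univ) :
    ∃ (M : Type) (lt : M → M → Prop), IsStrictTotalOrder M lt ∧
      ∃ (μ : V → List M) (φ : V → WithTop ℤ),
        G.IsProgressMeasureOn Set.univ d lt μ φ := by
  classical
  obtain ⟨b, hdecb⟩ := hdec
  obtain ⟨v0, -, hv0⟩ := decomp_top G hdecb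
  have hbd : b ≤ d := by rw [← hv0]; exact hpri v0
  have hdrled : drel b ≤ d := by
    rcases Nat.even_or_odd b with he | ho
    · rw [drel_of_even he]; exact hbd
    · rw [drel_of_odd ho]
      obtain ⟨r, hr⟩ := hd; obtain ⟨s, hs⟩ := ho; omega
  obtain ⟨k, hk⟩ := even_sub_even hd (drel_even' b) hdrled
  obtain ⟨μ, φ, hcomps, hmain⟩ := pkg_of_decomp G b Set.univ hdecb
  have hsto : IsStrictTotalOrder (List ℕ) mlt := by
    unfold mlt; exact (inferInstance : IsStrictTotalOrder (List ℕ) (· < ·))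
  have hdd : drel d = d := drel_of_even hd
  rcases Nat.eq_zero_or_pos k with hk0 | hk0
  · -- no padding needed
    have hd' : drel b = d := by omega
    refine ⟨List ℕ, mlt, hsto, μ, φ, ?_, ?_, ?_⟩
    · intro v hv
      obtain ⟨-, L1, L2, L3, -, -⟩ := hmain v hv
      rw [← hd']
      exact ⟨L1, L2, L3⟩
    · intro v hv hdis
      obtain ⟨-, -, -, -, P1, -⟩ := hmain v hv
      rw [← hd']
      exact P1 hdis
    · intro v hv hdis u hu he
      obtain ⟨-, -, -, -, -, P2⟩ := hmain v hv
      rw [← hd']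
      exact P2 hdis u hu he
  · -- pad with k dummy components
    have hdw : drel d = drel b + 2 * k := by rw [hdd]; exact hk
    set μ' : V → List (List ℕ) := fun v => EmbL 0 k (μ v) with hμ'def
    have htr : ∀ v u : V, G.Progressive (drel b) mlt μ φ v u →
        G.Progressive d mlt μ' φ v u := by
      intro v u hprog
      have hp : G.pri v ≤ drel b :=
        le_trans (hmain v (Set.mem_univ v)).1 (le_drel b)
      have := prog_transfer G hdw hp (Or.inl hk0)
        (hcomps v (Set.mem_univ v)) (rfl : μ' v = EmbL 0 k (μ v))
        (rfl : μ' u = EmbL 0 k (μ u)) rfl rfl hprog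
      rwa [hdd] at this
    refine ⟨List ℕ, mlt, hsto, μ', φ, ?_, ?_, ?_⟩
    · intro v hv
      obtain ⟨-, ⟨l, hlodd, hlpri, hleq⟩, L2, L3⟩ := hmain v hv
      have hlen : (μ' v).length = k + (μ v).length :=
        EmbL_length (by omega : ¬(k = 0 ∧ μ v = []))
      refine ⟨⟨l, hlodd, hlpri, by rw [hlen]; omega⟩, ?_, L3.1⟩
      intro hc
      have := L2 hc
      rw [hlen]; omega
    · intro v hv hdis
      obtain ⟨u, hu, he, hprog⟩ := (hmain v hv).2.2.2.2.1 hdis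
      exact ⟨u, hu, he, htr v u hprog⟩
    · intro v hv hdis u hu he
      exact htr v u ((hmain v hv).2.2.2.2.2 hdis u hu he)
end Helpers
end

section
/- Let G be a mean-payoff parity game whose vertex priorities are bounded by an even number d. If there exists a progress measure for G (over some linearly ordered set M), then Dis has a positional strategy that is winning for her from every vertex of G. -/
section LexAux

variable {M : Type} {lt : M → M → Prop}

lemma lex_take {x y : List M} (h : List.Lex lt x y) :
    ∀ a : ℕ, List.Lex lt (x.take a) (y.take a) ∨ x.take a = y.take a := by
  induction h with
  | nil =>
    intro a
    match a with
    | 0 => exact Or.inr rfl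
    | a+1 => exact Or.inl (by simpa using List.Lex.nil)
  | @cons c l₁ l₂ h ih =>
    intro a
    match a with
    | 0 => exact Or.inr rfl
    | a+1 =>
      rcases ih a with h' | h'
      · exact Or.inl (by simp only [List.take_succ_cons]; exact List.Lex.cons h')
      · exact Or.inr (by simp only [List.take_succ_cons, h'])
  | @rel a₁ l₁ a₂ l₂ h =>
    intro a
    match a with
    | 0 => exact Or.inr rfl
    | a+1 => exact Or.inl (by simp only [List.take_succ_cons]; exact List.Lex.rel h)

lemma not_lex_take (hirr : ∀ x : M, ¬ lt x x) :
    ∀ (t : List M) (n : ℕ), ¬ List.Lex lt t (t.take n) := by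
  intro t
  induction t with
  | nil => intro n h; simp at h
  | cons x t ih =>
    intro n h
    match n with
    | 0 => simp at h
    | n+1 =>
      simp only [List.take_succ_cons] at h
      cases h with
      | cons h => exact ih n h
      | rel h => exact hirr x h

lemma lex_trans (htr : ∀ a b c : M, lt a b → lt b c → lt a c) :
    ∀ {x y z : List M}, List.Lex lt x y → List.Lex lt y z → List.Lex lt x z := by
  intro x y z hxy
  induction hxy generalizing z with
  | nil =>
    intro hyz
    cases hyz with
    | cons h => exact List.Lex.nil
    | rel h => exact List.Lex.nil
  | cons h ih =>
    intro hyz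
    cases hyz with
    | cons h' => exact List.Lex.cons (ih h')
    | rel h' => exact List.Lex.rel h'
  | rel h =>
    intro hyz
    cases hyz with
    | cons h' => exact List.Lex.rel h
    | rel h' => exact List.Lex.rel (htr _ _ _ h h')

/-- An eventually non-increasing sequence (w.r.t. a transitive irreflexive
relation) with finite range is eventually constant. -/
lemma eventually_const_of_step {α : Type*} {lt' : α → α → Prop}
    (htr : ∀ a b c : α, lt' a b → lt' b c → lt' a c) (hirr : ∀ x : α, ¬ lt' x x)
    (t : ℕ → α) (hfin : (Set.range t).Finite) (N : ℕ)
    (hstep : ∀ i, N ≤ i → t (i+1) = t i ∨ lt' (t (i+1)) (t i)) :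
    ∃ N₂, N ≤ N₂ ∧ ∀ i, N₂ ≤ i → t i = t N₂ := by
  classical
  have hchain : ∀ i, N ≤ i → ∀ m, t (i + m) = t i ∨ lt' (t (i + m)) (t i) := by
    intro i hi m
    induction m with
    | zero => exact Or.inl rfl
    | succ m ih =>
      have hstep' := hstep (i + m) (le_trans hi (Nat.le_add_right _ _))
      have heq : i + (m + 1) = (i + m) + 1 := rfl
      rw [heq]
      rcases ih with h1 | h1
      · rcases hstep' with h2 | h2
        · exact Or.inl (by rw [h2, h1])
        · exact Or.inr (by rw [h1] at h2; exact h2)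
      · rcases hstep' with h2 | h2
        · exact Or.inr (by rw [h2]; exact h1)
        · exact Or.inr (htr _ _ _ h2 h1)
  have hchain' : ∀ i j, N ≤ i → i ≤ j → t j = t i ∨ lt' (t j) (t i) := by
    intro i j hi hij
    obtain ⟨m, rfl⟩ := Nat.exists_eq_add_of_le hij
    exact hchain i hi m
  set Dset : Set ℕ := {i | N ≤ i ∧ lt' (t (i+1)) (t i)} with hDset
  have hDfin : Dset.Finite := by
    apply Set.Finite.of_finite_image (f := fun i => t (i + 1))
    · exact hfin.subset (by rintro x ⟨i, _, rfl⟩; exact ⟨i + 1, rfl⟩)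
    · rintro i ⟨hiN, hi⟩ j ⟨hjN, hj⟩ hij
      simp only [] at hij
      by_contra hne
      rcases Nat.lt_or_ge i j with hlt | hge
      · have h1 : t j = t (i+1) ∨ lt' (t j) (t (i+1)) := hchain' (i+1) j (by omega) (by omega)
        have h2 : lt' (t (j+1)) (t (i+1)) := by
          rcases h1 with h1 | h1
          · rw [← h1]; exact hj
          · exact htr _ _ _ hj h1
        rw [show t (i+1) = t (j+1) from hij] at h2
        exact hirr _ h2
      · have hlt : j < i := by omega
        have h1 : t i = t (j+1) ∨ lt' (t i) (t (j+1)) := hchain' (j+1) i (by omega) (by omega)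
        have h2 : lt' (t (i+1)) (t (j+1)) := by
          rcases h1 with h1 | h1
          · rw [← h1]; exact hi
          · exact htr _ _ _ hi h1
        rw [show t (j+1) = t (i+1) from hij.symm] at h2
        exact hirr _ h2
  obtain ⟨b, hb⟩ := hDfin.bddAbove
  refine ⟨max N (b + 1), le_max_left _ _, ?_⟩
  have hnostep : ∀ i, max N (b + 1) ≤ i → t (i + 1) = t i := by
    intro i hi
    rcases hstep i (le_trans (le_max_left _ _) hi) with h | h
    · exact h
    · exfalso
      have : i ∈ Dset := ⟨le_trans (le_max_left _ _) hi, h⟩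
      have := hb this
      omega
  intro i hi
  obtain ⟨m, rfl⟩ := Nat.exists_eq_add_of_le hi
  induction m with
  | zero => rfl
  | succ m ih =>
    rw [← Nat.add_assoc]
    rw [hnostep _ (by omega)]
    exact ih (by omega)

end LexAux


/-- If there is a progress measure (over some linearly
ordered set `M`) for a game with priorities bounded by the even number `d`,
then Dis has a positional strategy winning for her from every vertex. -/
theorem progress_measure_to_dis_winning
    {V : Type} [Fintype V] (G : MPPGame V)
    (d : ℕ) (hd : Even d) (hpri : ∀ v, G.pri v ≤ d)
    (h : ∃ (M : Type) (lt : M → M → Prop), IsStrictTotalOrder M lt ∧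
      ∃ (μ : V → List M) (φ : V → WithTop ℤ),
        G.IsProgressMeasureOn Set.univ d lt μ φ) :
    ∃ σ : V → V, G.PosDisStrategy σ ∧ ∀ v, G.DisWinsFromPos σ v := by
  classical
  obtain ⟨M, lt, hsto, μ, φ, hlab, hdisP, hconP⟩ := h
  have hirr : ∀ x : M, ¬ lt x x := fun x => hsto.toIsStrictOrder.toIrrefl.irrefl x
  have htrans : ∀ x y z : M, lt x y → lt y z → lt x z :=
    fun x y z => hsto.toIsStrictOrder.toIsTrans.trans x y z
  have hdis' : ∀ v : V, G.disOwns v → ∃ u, G.edge v u ∧ G.Progressive d lt μ φ v u := by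
    intro v hv
    obtain ⟨u, -, h1, h2⟩ := hdisP v (Set.mem_univ v) hv
    exact ⟨u, h1, h2⟩
  set σ : V → V := fun v =>
    if hv : G.disOwns v then (hdis' v hv).choose else (G.exists_succ v).choose with hσ
  have hσedge : ∀ v, G.disOwns v → G.edge v (σ v) ∧ G.Progressive d lt μ φ v (σ v) := by
    intro v hv
    have : σ v = (hdis' v hv).choose := by rw [hσ]; simp only [dif_pos hv]
    rw [this]
    exact ⟨(hdis' v hv).choose_spec.1, (hdis' v hv).choose_spec.2⟩
  refine ⟨σ, fun v hv => (hσedge v hv).1, ?_⟩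
  intro v p hplay hp0 hcons hCon
  obtain ⟨⟨k, hkodd, hkinf, hkmax⟩, hpay⟩ := hCon
  have hprog : ∀ i, G.Progressive d lt μ φ (p i) (p (i+1)) := by
    intro i
    by_cases hv : G.disOwns (p i)
    · rw [hcons i hv]; exact (hσedge (p i) hv).2
    · exact hconP (p i) (Set.mem_univ _) hv (p (i+1)) (Set.mem_univ _) (hplay i)
  have hprog' : ∀ i,
      seqLt lt (trunc d (G.pri (p i)) (μ (p (i+1)))) (μ (p i)) ∨
      (trunc d (G.pri (p i)) (μ (p (i+1))) = μ (p i) ∧ Even (G.pri (p i)) ∧ φ (p i) = ⊤) ∨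
      (μ (p (i+1)) = μ (p i) ∧ φ (p i) ≠ ⊤ ∧
        φ (p (i+1)) ≤ φ (p i) + (G.cost (p i) (p (i+1)) : WithTop ℤ)) := fun i => hprog i
  have hlab' := fun i => hlab (p i) (Set.mem_univ _)
  set D : Set ℕ := {i | ¬ (μ (p (i+1)) = μ (p i) ∧ φ (p i) ≠ ⊤ ∧
      φ (p (i+1)) ≤ φ (p i) + (G.cost (p i) (p (i+1)) : WithTop ℤ))} with hDdef
  have hkodd2 : k % 2 = 1 := Nat.odd_iff.mp hkodd
  have hdeven2 : d % 2 = 0 := Nat.even_iff.mp hd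
  by_cases hDfin : D.Finite
  · -- Case A : eventually every step is of the third (mean-payoff) kind
    obtain ⟨b, hb⟩ := hDfin.bddAbove
    set N := b + 1 with hN
    have htriple : ∀ i, N ≤ i → μ (p (i+1)) = μ (p i) ∧ φ (p i) ≠ ⊤ ∧
        φ (p (i+1)) ≤ φ (p i) + (G.cost (p i) (p (i+1)) : WithTop ℤ) := by
      intro i hi
      by_contra hcontra
      have hmem : i ∈ D := hcontra
      have := hb hmem
      omega
    set z : ℕ → ℤ := fun i => WithTop.untopD 0 (φ (p i)) with hz
    have hzc : ∀ i, N ≤ i → φ (p i) = ((z i : ℤ) : WithTop ℤ) := by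
      intro i hi
      obtain ⟨x, hx⟩ := WithTop.ne_top_iff_exists.mp (htriple i hi).2.1
      rw [hz]
      simp only [← hx, WithTop.untopD_coe]
    have hzstep : ∀ i, N ≤ i → z (i+1) ≤ z i + G.cost (p i) (p (i+1)) := by
      intro i hi
      have h3 := (htriple i hi).2.2
      rw [hzc i hi, hzc (i+1) (by omega)] at h3
      exact_mod_cast h3
    have hz0 : ∀ i, N ≤ i → 0 ≤ z i := by
      intro i hi
      have hh := ((hlab' i).2.2 (htriple i hi).2.1).1
      rw [hzc i hi] at hh
      exact_mod_cast hh
    have htel : ∀ m, z (N + m) ≤ z N + ∑ i ∈ Finset.Ico N (N+m), G.cost (p i) (p (i+1)) := by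
      intro m
      induction m with
      | zero => simp
      | succ m ih =>
        have h2 : z ((N+m)+1) ≤ z (N+m) + G.cost (p (N+m)) (p ((N+m)+1)) :=
          hzstep (N+m) (by omega)
        have hrw : N + (m+1) = (N+m)+1 := rfl
        rw [hrw, Finset.sum_Ico_succ_top (Nat.le_add_right N m)]
        linarith
    have hlowZ : ∀ m, N ≤ m → -(z N) ≤ ∑ i ∈ Finset.Ico N m, G.cost (p i) (p (i+1)) := by
      intro m hm
      obtain ⟨u, rfl⟩ := Nat.exists_eq_add_of_le hm
      have h1 := htel u
      have h2 := hz0 (N+u) (by omega)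
      linarith
    set S : ℕ → ℝ := fun m => ∑ i ∈ Finset.range m, (G.cost (p i) (p (i+1)) : ℝ) with hS
    have hSlow : ∀ m, N ≤ m → S N - (z N : ℝ) ≤ S m := by
      intro m hm
      have hSm : S m = S N + ∑ i ∈ Finset.Ico N m, (G.cost (p i) (p (i+1)) : ℝ) :=
        (Finset.sum_range_add_sum_Ico _ hm).symm
      have hlzR : -((z N : ℤ) : ℝ) ≤ ∑ i ∈ Finset.Ico N m, (G.cost (p i) (p (i+1)) : ℝ) := by
        exact_mod_cast hlowZ m hm
      rw [hSm]
      push_cast at hlzR ⊢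
      linarith
    set C₀ : ℝ := ∑ uv : V × V, |(G.cost uv.1 uv.2 : ℝ)| with hC₀
    have hC₀nn : 0 ≤ C₀ := Finset.sum_nonneg fun _ _ => abs_nonneg _
    have hCbound : ∀ i, |(G.cost (p i) (p (i+1)) : ℝ)| ≤ C₀ := by
      intro i
      exact Finset.single_le_sum (f := fun uv : V × V => |(G.cost uv.1 uv.2 : ℝ)|)
        (fun _ _ => abs_nonneg _) (Finset.mem_univ (p i, p (i+1)))
    have hSabs : ∀ m : ℕ, |S m| ≤ m * C₀ := by
      intro m
      calc |S m| ≤ ∑ i ∈ Finset.range m, |(G.cost (p i) (p (i+1)) : ℝ)| :=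
            Finset.abs_sum_le_sum_abs _ _
        _ ≤ ∑ _i ∈ Finset.range m, C₀ := Finset.sum_le_sum fun i _ => hCbound i
        _ = m * C₀ := by rw [Finset.sum_const, Finset.card_range, nsmul_eq_mul]
    have hub : ∀ m : ℕ, S m / m ≤ C₀ := by
      intro m
      rcases Nat.eq_zero_or_pos m with rfl | hm
      · simpa [hS] using hC₀nn
      · have hmpos : (0:ℝ) < m := by exact_mod_cast hm
        rw [div_le_iff₀ hmpos]
        calc S m ≤ |S m| := le_abs_self _
          _ ≤ m * C₀ := hSabs m
          _ = C₀ * m := by ring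
    have hbdd : Filter.IsBoundedUnder (· ≤ ·) Filter.atTop (fun m : ℕ => S m / m) :=
      Filter.isBoundedUnder_of ⟨C₀, hub⟩
    have hpay' : Filter.limsup (fun m : ℕ => S m / m) Filter.atTop < 0 := hpay
    obtain ⟨c, hc1, hc2⟩ := exists_between hpay'
    have hev1 := Filter.eventually_lt_of_limsup_lt hc1 hbdd
    have ht0 : Filter.Tendsto (fun m : ℕ => (S N - (z N : ℝ)) / m) Filter.atTop (nhds 0) :=
      tendsto_const_div_atTop_nhds_zero_nat _
    have hev2 : ∀ᶠ m : ℕ in Filter.atTop, c < (S N - (z N : ℝ)) / m :=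
      (tendsto_order.mp ht0).1 c hc2
    have hev3 : ∀ᶠ m : ℕ in Filter.atTop, (S N - (z N : ℝ)) / m ≤ S m / m := by
      filter_upwards [Filter.eventually_ge_atTop (max N 1)] with m hm
      have hm1 : (0:ℝ) < m := by
        have h1 : 1 ≤ m := le_trans (le_max_right _ _) hm
        exact_mod_cast h1
      exact (div_le_div_iff_of_pos_right hm1).mpr (hSlow m (le_trans (le_max_left _ _) hm))
    obtain ⟨m, hm1, hm2, hm3⟩ := (hev1.and (hev2.and hev3)).exists
    linarith
  · -- Case B : infinitely many non-(iii) steps; purely combinatorial contradiction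
    have hDinf : D.Infinite := hDfin
    have hunb : ∀ (A : Set ℕ), A.Infinite → ∀ n : ℕ, ∃ i, n ≤ i ∧ i ∈ A := by
      intro A hA n
      by_contra hc
      push_neg at hc
      apply hA
      apply Set.Finite.subset (Set.finite_Iio n)
      intro i hi
      simp only [Set.mem_Iio]
      by_contra hlt
      push_neg at hlt
      exact hc i hlt hi
    set cls : ℕ → Set ℕ := fun r => {i | i ∈ D ∧ G.pri (p i) = r} with hcls
    have hexinf : ∃ r, (cls r).Infinite := by
      by_contra hall
      push_neg at hall
      apply hDfin
      have hsub : D ⊆ ⋃ r ∈ (Finset.image G.pri Finset.univ : Finset ℕ), cls r := by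
        intro i hi
        refine Set.mem_biUnion ?_ (⟨hi, rfl⟩ : i ∈ cls (G.pri (p i)))
        exact Finset.mem_coe.mpr (Finset.mem_image_of_mem _ (Finset.mem_univ _))
      exact Set.Finite.subset
        (Set.Finite.biUnion (Finset.finite_toSet _) fun r _ => hall r) hsub
    have hinfOft : ∀ r, (cls r).Infinite → G.InfOften p r := by
      intro r hr n
      obtain ⟨i, hiN, hiA⟩ := hunb _ hr n
      exact ⟨i, hiN, hiA.2⟩
    set P : Set ℕ := {r | (cls r).Infinite} with hP
    have hPk : ∀ r ∈ P, r ≤ k := fun r hr => hkmax r (hinfOft r hr)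
    have hPbdd : BddAbove P := ⟨k, hPk⟩
    set q := sSup P with hq
    have hqP : q ∈ P := Nat.sSup_mem hexinf hPbdd
    have hqk : q ≤ k := hPk q hqP
    have hbigfin : {i | i ∈ D ∧ q < G.pri (p i)}.Finite := by
      have hsub : {i | i ∈ D ∧ q < G.pri (p i)} ⊆
          ⋃ r ∈ ((Finset.image G.pri Finset.univ).filter (fun r => q < r) : Finset ℕ), cls r := by
        rintro i ⟨hiD, hiq⟩
        refine Set.mem_biUnion ?_ (⟨hiD, rfl⟩ : i ∈ cls (G.pri (p i)))
        refine Finset.mem_coe.mpr (Finset.mem_filter.mpr ⟨?_, hiq⟩)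
        exact Finset.mem_image_of_mem _ (Finset.mem_univ _)
      refine Set.Finite.subset (Set.Finite.biUnion (Finset.finite_toSet _) ?_) hsub
      intro r hr
      rw [← Set.not_infinite]
      intro hinf'
      have hrP : r ∈ P := hinf'
      have hrq : r ≤ q := le_csSup hPbdd hrP
      rw [Finset.mem_coe, Finset.mem_filter] at hr
      omega
    obtain ⟨b₁, hb₁⟩ := hbigfin.bddAbove
    set N₁ := b₁ + 1 with hN₁
    have hN₁pri : ∀ i, N₁ ≤ i → i ∈ D → G.pri (p i) ≤ q := by
      intro i hi hiD
      by_contra hgt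
      push_neg at hgt
      have hmem : i ∈ {i | i ∈ D ∧ q < G.pri (p i)} := ⟨hiD, hgt⟩
      have := hb₁ hmem
      omega
    set a := (d + 1 - q) / 2 with ha
    set t : ℕ → List M := fun i => (μ (p i)).take a with ht
    have hstepT : ∀ i, N₁ ≤ i → t (i+1) = t i ∨ List.Lex lt (t (i+1)) (t i) := by
      intro i hi
      by_cases hiD : i ∈ D
      · have hπ : G.pri (p i) ≤ q := hN₁pri i hi hiD
        have hamin : min a ((d + 1 - G.pri (p i)) / 2) = a := by
          apply min_eq_left
          omega
        rcases hprog' i with h1 | h2 | h3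
        · unfold seqLt trunc at h1
          rcases lex_take h1 a with h' | h'
          · right
            rw [List.take_take, hamin] at h'
            exact h'
          · left
            rw [List.take_take, hamin] at h'
            exact h'
        · left
          have h2' := h2.1
          unfold trunc at h2'
          show (μ (p (i+1))).take a = (μ (p i)).take a
          rw [← h2', List.take_take, hamin]
        · exact absurd h3 hiD
      · have h3 := not_not.mp hiD
        left
        show (μ (p (i+1))).take a = (μ (p i)).take a
        rw [h3.1]
    have hfinT : (Set.range t).Finite := by
      apply Set.Finite.subset (Set.finite_range (fun v : V => (μ v).take a))
      rintro x ⟨i, rfl⟩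
      exact ⟨p i, rfl⟩
    have hlexirr : ∀ x : List M, ¬ List.Lex lt x x := fun x => by
      have hh := not_lex_take hirr x x.length
      rwa [List.take_length] at hh
    have hlextrans : ∀ x y z : List M, List.Lex lt x y → List.Lex lt y z → List.Lex lt x z :=
      fun x y z hxy hyz => lex_trans htrans hxy hyz
    obtain ⟨N₂, hN₂ge, hN₂c⟩ := eventually_const_of_step hlextrans hlexirr t hfinT N₁ hstepT
    set s := t N₂ with hs
    obtain ⟨i₀, hi₀ge, hi₀cls⟩ := hunb (cls q) hqP (max N₂ N₁)
    have hi₀D : i₀ ∈ D := hi₀cls.1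
    have hi₀pri : G.pri (p i₀) = q := hi₀cls.2
    have hti₀ : t i₀ = s := hN₂c i₀ (le_trans (le_max_left _ _) hi₀ge)
    have hti₀1 : t (i₀+1) = s := hN₂c (i₀+1) (by
      have := le_trans (le_max_left N₂ N₁) hi₀ge; omega)
    obtain ⟨l₀, hl₀odd, hl₀ge, hl₀len⟩ := (hlab' i₀).1
    have hl₀odd2 : l₀ % 2 = 1 := Nat.odd_iff.mp hl₀odd
    rw [hi₀pri] at hl₀ge
    have h2 : trunc d (G.pri (p i₀)) (μ (p (i₀+1))) = μ (p i₀) ∧ Even (G.pri (p i₀)) ∧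
        φ (p i₀) = ⊤ := by
      rcases hprog' i₀ with h1 | h2 | h3
      · exfalso
        unfold seqLt trunc at h1
        rw [hi₀pri] at h1
        have hlen : (μ (p i₀)).length ≤ a := by omega
        have hμi₀ : μ (p i₀) = s := by
          rw [← hti₀]
          show _ = (μ (p i₀)).take a
          rw [List.take_of_length_le hlen]
        rw [hμi₀] at h1
        have h1' : List.Lex lt s s := by
          have : (μ (p (i₀+1))).take ((d + 1 - q) / 2) = s := hti₀1
          rwa [this] at h1
        have := not_lex_take hirr s s.length
        rw [List.take_length] at this
        exact this h1'
      · exact h2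
      · exact absurd h3 hi₀D
    obtain ⟨hμeq₀, hqeven', hφ₀⟩ := h2
    have hqeven2 : q % 2 = 0 := by
      have := Nat.even_iff.mp hqeven'
      rwa [hi₀pri] at this
    have hμi₀s : μ (p i₀) = s := by
      unfold trunc at hμeq₀
      rw [hi₀pri] at hμeq₀
      rw [← hμeq₀]
      exact hti₀1
    have hφtop := (hlab' i₀).2.1 hφ₀
    rw [hi₀pri] at hφtop
    have hLs : (μ (p i₀)).length = s.length := by rw [hμi₀s]
    have hslen : 2 * s.length = d - q ∧ q ≤ d := by omega
    have haslen : a = s.length := by omega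
    have hqk' : q + 1 ≤ k := by omega
    -- a vertex of priority k with μ-value s and finite φ
    obtain ⟨j, hjge, hjk⟩ := hkinf (max N₂ N₁)
    have hjD : j ∉ D := by
      intro hjD
      have := hN₁pri j (le_trans (le_max_right _ _) hjge) hjD
      omega
    have htriple_j := not_not.mp hjD
    obtain ⟨lj, hljodd, hljge, hljlen⟩ := (hlab' j).1
    have hljodd2 : lj % 2 = 1 := Nat.odd_iff.mp hljodd
    rw [hjk] at hljge
    have hμjlen : (μ (p j)).length ≤ a := by omega
    have hμjs : μ (p j) = s := by
      rw [← hN₂c j (le_trans (le_max_left _ _) hjge)]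
      show _ = (μ (p j)).take a
      rw [List.take_of_length_le hμjlen]
    have hjN₂ : N₂ ≤ j := le_trans (le_max_left _ _) hjge
    -- key step lemma
    have hstep3 : ∀ i, N₂ ≤ i → μ (p i) = s → φ (p i) ≠ ⊤ →
        (μ (p (i+1)) = s ∧ φ (p (i+1)) ≠ ⊤) ∧ i ∉ D := by
      intro i hiN hμs hφne
      have h3 : μ (p (i+1)) = μ (p i) ∧ φ (p i) ≠ ⊤ ∧
          φ (p (i+1)) ≤ φ (p i) + (G.cost (p i) (p (i+1)) : WithTop ℤ) := by
        rcases hprog' i with h1 | h2 | h3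
        · exfalso
          obtain ⟨li, hliodd, hlige, hlilen⟩ := (hlab' i).1
          have hliodd2 : li % 2 = 1 := Nat.odd_iff.mp hliodd
          have hLi : (μ (p i)).length = s.length := by rw [hμs]
          have hπle : G.pri (p i) ≤ q + 1 := by omega
          have hab : a ≤ (d + 1 - G.pri (p i)) / 2 := by omega
          have hta : ((μ (p (i+1))).take ((d + 1 - G.pri (p i)) / 2)).take a = s := by
            rw [List.take_take, min_eq_left hab]
            exact hN₂c (i+1) (by omega)
          unfold seqLt trunc at h1
          rw [hμs] at h1
          rw [haslen] at hta
          have hnot := not_lex_take hirr ((μ (p (i+1))).take ((d + 1 - G.pri (p i)) / 2)) s.length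
          rw [hta] at hnot
          exact hnot h1
        · exact absurd h2.2.2 hφne
        · exact h3
      refine ⟨⟨by rw [h3.1, hμs], ?_⟩, fun hD' => hD' h3⟩
      have hrhs : φ (p i) + (G.cost (p i) (p (i+1)) : WithTop ℤ) ≠ ⊤ :=
        WithTop.add_ne_top.mpr ⟨hφne, WithTop.coe_ne_top⟩
      exact ne_top_of_le_ne_top hrhs h3.2.2
    have hkey : ∀ m, μ (p (j+m)) = s ∧ φ (p (j+m)) ≠ ⊤ := by
      intro m
      induction m with
      | zero => exact ⟨hμjs, htriple_j.2.1⟩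
      | succ m ih =>
        exact (hstep3 (j+m) (by omega) ih.1 ih.2).1
    obtain ⟨i₁, hi₁ge, hi₁D⟩ := hunb D hDinf j
    obtain ⟨m₁, rfl⟩ := Nat.exists_eq_add_of_le hi₁ge
    exact (hstep3 (j+m₁) (by omega) (hkey m₁).1 (hkey m₁).2).2 hi₁D
end
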